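/- arXiv:1201.1342 — 8 statements merged into one kernel-verified Lean document; each statement's English description precedes it below -/
import Mathlib

section
/- The center of the Schrödinger–Virasoro Lie algebra 𝔰𝔳 is exactly the two-dimensional subspace ℂM₀ ⊕ ℂc spanned by M₀ and c. -/
/-- Index type for the distinguished basis of the Schrödinger–Virasoro algebra.
`Y n` stands for the basis element `Y_{n+1/2}`. -/
inductive SVIndex : Type
  | L : ℤ → SVIndex
  | M : ℤ → SVIndex
  | Y : ℤ → SVIndex
  | c : SVIndex

/-- A realization of the Schrödinger–Virasoro Lie algebra: a complex Lie algebra `sv`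
with distinguished elements `L n`, `M n`, `Y n` (representing `Y_{n+1/2}`) and `c`
which form a basis and satisfy the defining bracket relations. -/
structure SVAlgebra (sv : Type*) [LieRing sv] [LieAlgebra ℂ sv] where
  L : ℤ → sv
  M : ℤ → sv
  Y : ℤ → sv
  c : sv
  indep : LinearIndependent ℂ (fun i : SVIndex =>
    match i with
    | .L n => L n
    | .M n => M n
    | .Y n => Y n
    | .c => c)
  span_top : Submodule.span ℂ (Set.range (fun i : SVIndex =>
    match i with
    | .L n => L n
    | .M n => M n
    | .Y n => Y n
    | .c => c)) = ⊤
  bracket_LL : ∀ m n : ℤ, ⁅L m, L n⁆ =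
    ((n : ℂ) - (m : ℂ)) • L (m + n)
      + (if m + n = 0 then ((m : ℂ) ^ 3 - (m : ℂ)) / 12 else 0) • c
  bracket_LM : ∀ m n : ℤ, ⁅L m, M n⁆ = (n : ℂ) • M (m + n)
  bracket_LY : ∀ m n : ℤ, ⁅L m, Y n⁆ = ((n : ℂ) + (1 - (m : ℂ)) / 2) • Y (m + n)
  bracket_YY : ∀ m n : ℤ, ⁅Y m, Y n⁆ = ((n : ℂ) - (m : ℂ)) • M (m + n + 1)
  bracket_MM : ∀ m n : ℤ, ⁅M m, M n⁆ = 0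
  bracket_MY : ∀ m n : ℤ, ⁅M m, Y n⁆ = 0
  bracket_c : ∀ x : sv, ⁅x, c⁆ = 0

variable {sv : Type*} [LieRing sv] [LieAlgebra ℂ sv]

noncomputable def svBasis (A : SVAlgebra sv) : Module.Basis SVIndex ℂ sv :=
  Module.Basis.mk A.indep (by rw [A.span_top])

lemma svBasis_L (A : SVAlgebra sv) (n : ℤ) : svBasis A (SVIndex.L n) = A.L n := by
  rw [svBasis, Module.Basis.mk_apply]

lemma svBasis_M (A : SVAlgebra sv) (n : ℤ) : svBasis A (SVIndex.M n) = A.M n := by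
  rw [svBasis, Module.Basis.mk_apply]

lemma svBasis_Y (A : SVAlgebra sv) (n : ℤ) : svBasis A (SVIndex.Y n) = A.Y n := by
  rw [svBasis, Module.Basis.mk_apply]

lemma svBasis_c (A : SVAlgebra sv) : svBasis A SVIndex.c = A.c := by
  rw [svBasis, Module.Basis.mk_apply]

noncomputable def svG : SVIndex → ℂ
  | .L n => n
  | .M n => n
  | .Y n => (n : ℂ) + 1/2
  | .c => 0

lemma svG_ne_zero_Y (n : ℤ) : svG (SVIndex.Y n) ≠ 0 := by
  show (n : ℂ) + 1/2 ≠ 0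
  intro h
  have h2 : ((2*n+1 : ℤ) : ℂ) = 0 := by push_cast; linear_combination 2 * h
  exact absurd (by exact_mod_cast h2) (by omega)

lemma ad0 (A : SVAlgebra sv) (i : SVIndex) :
    ⁅A.L 0, svBasis A i⁆ = svG i • svBasis A i := by
  cases i with
  | L n =>
      rw [svBasis_L, A.bracket_LL 0 n]
      show _ = (n : ℂ) • A.L n
      simp
  | M n =>
      rw [svBasis_M, A.bracket_LM 0 n]
      show _ = (n : ℂ) • A.M n
      norm_num
  | Y n =>
      rw [svBasis_Y, A.bracket_LY 0 n]
      show _ = ((n : ℂ) + 1/2) • A.Y n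
      norm_num
  | c =>
      rw [svBasis_c, A.bracket_c]
      show (0 : sv) = (0 : ℂ) • A.c
      simp

lemma repr_ad0 (A : SVAlgebra sv) (z : sv) (i : SVIndex) :
    (svBasis A).repr ⁅A.L 0, z⁆ i = svG i * (svBasis A).repr z i := by
  have h : (Finsupp.lapply i ∘ₗ ((svBasis A).repr : sv →ₗ[ℂ] (SVIndex →₀ ℂ)) ∘ₗ
        (LieAlgebra.ad ℂ sv (A.L 0) : sv →ₗ[ℂ] sv)) =
      svG i • (Finsupp.lapply i ∘ₗ ((svBasis A).repr : sv →ₗ[ℂ] (SVIndex →₀ ℂ))) := by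
    refine Module.Basis.ext (svBasis A) fun j => ?_
    simp only [LinearMap.comp_apply, LinearMap.smul_apply, Finsupp.lapply_apply,
      LinearEquiv.coe_coe, LieAlgebra.ad_apply]
    rw [ad0, map_smul, Module.Basis.repr_self]
    rcases eq_or_ne j i with rfl | hji
    · simp
    · simp [Finsupp.single_apply, hji]
  have := LinearMap.congr_fun h z
  simpa using this

lemma ad1_L0 (A : SVAlgebra sv) (z : sv) :
    (svBasis A).repr ⁅A.L 1, z⁆ (SVIndex.L 1) = -((svBasis A).repr z (SVIndex.L 0)) := by
  have h : (Finsupp.lapply (SVIndex.L 1) ∘ₗ ((svBasis A).repr : sv →ₗ[ℂ] (SVIndex →₀ ℂ)) ∘ₗ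
        (LieAlgebra.ad ℂ sv (A.L 1) : sv →ₗ[ℂ] sv)) =
      -(Finsupp.lapply (SVIndex.L 0) ∘ₗ ((svBasis A).repr : sv →ₗ[ℂ] (SVIndex →₀ ℂ))) := by
    refine Module.Basis.ext (svBasis A) fun j => ?_
    simp only [LinearMap.comp_apply, LinearMap.neg_apply, Finsupp.lapply_apply,
      LinearEquiv.coe_coe, LieAlgebra.ad_apply]
    cases j with
    | L n =>
        rw [svBasis_L, A.bracket_LL 1 n, ← svBasis_L A (1+n), ← svBasis_c A,
          map_add, map_smul, map_smul, Module.Basis.repr_self, Module.Basis.repr_self,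
          ← svBasis_L A n, Module.Basis.repr_self]
        rcases eq_or_ne n 0 with rfl | hn
        · norm_num [Finsupp.single_apply]
        · have h1 : SVIndex.L (1+n) ≠ SVIndex.L 1 := by simp; omega
          have h2 : SVIndex.L n ≠ SVIndex.L 0 := by simp [hn]
          simp [Finsupp.single_apply, h1, h2]
    | M n =>
        rw [svBasis_M, A.bracket_LM 1 n, ← svBasis_M A (1+n), map_smul, Module.Basis.repr_self,
          ← svBasis_M A n, Module.Basis.repr_self]
        simp [Finsupp.single_apply]
    | Y n =>
        rw [svBasis_Y, A.bracket_LY 1 n, ← svBasis_Y A (1+n), map_smul, Module.Basis.repr_self,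
          ← svBasis_Y A n, Module.Basis.repr_self]
        simp [Finsupp.single_apply]
    | c =>
        rw [svBasis_c, A.bracket_c, ← svBasis_c A, Module.Basis.repr_self]
        simp [Finsupp.single_apply]
  have := LinearMap.congr_fun h z
  simpa using this

/-- The center of the Schrödinger–Virasoro Lie algebra is exactly `ℂ·M₀ ⊕ ℂ·c`. -/
theorem sv_center_eq_span (A : SVAlgebra sv) :
    (LieAlgebra.center ℂ sv : Submodule ℂ sv) =
      Submodule.span ℂ ({A.M 0, A.c} : Set sv) := by
  apply le_antisymm
  · -- center ⊆ span
    intro z hz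
    have hzc : z ∈ LieAlgebra.center ℂ sv := hz
    have hz' : ∀ x : sv, ⁅x, z⁆ = 0 :=
      (LieModule.mem_maxTrivSubmodule ℂ sv sv z).mp hzc
    set b := svBasis A with hb
    have h0 : ∀ i, svG i * b.repr z i = 0 := by
      intro i
      have := repr_ad0 A z i
      rw [hz' (A.L 0)] at this
      simpa using this.symm
    have hL0 : b.repr z (SVIndex.L 0) = 0 := by
      have := ad1_L0 A z
      rw [hz' (A.L 1)] at this
      simpa using this.symm
    have key : b.repr z = Finsupp.single (SVIndex.M 0) (b.repr z (SVIndex.M 0))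
        + Finsupp.single SVIndex.c (b.repr z SVIndex.c) := by
      ext i
      cases i with
      | L n =>
          rcases eq_or_ne n 0 with rfl | hn
          · simp [hL0, Finsupp.single_apply]
          · have hmul := h0 (SVIndex.L n)
            have hg : svG (SVIndex.L n) ≠ 0 := by
              show (n : ℂ) ≠ 0; exact_mod_cast hn
            have hzn : b.repr z (SVIndex.L n) = 0 :=
              (mul_eq_zero.mp hmul).resolve_left hg
            simp [hzn, Finsupp.single_apply]
      | M n =>
          rcases eq_or_ne n 0 with rfl | hn
          · simp
          · have hmul := h0 (SVIndex.M n)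
            have hg : svG (SVIndex.M n) ≠ 0 := by
              show (n : ℂ) ≠ 0; exact_mod_cast hn
            have hzn : b.repr z (SVIndex.M n) = 0 :=
              (mul_eq_zero.mp hmul).resolve_left hg
            have hne : SVIndex.M 0 ≠ SVIndex.M n := by simp; omega
            simp [hzn, Finsupp.single_apply, hne]
      | Y n =>
          have hzn : b.repr z (SVIndex.Y n) = 0 :=
            (mul_eq_zero.mp (h0 (SVIndex.Y n))).resolve_left (svG_ne_zero_Y n)
          simp [hzn]
      | c => simp
    have hz2 : z = b.repr z (SVIndex.M 0) • A.M 0 + b.repr z SVIndex.c • A.c := by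
      apply b.repr.injective
      rw [key, map_add, map_smul, map_smul, ← svBasis_M A 0, ← svBasis_c A,
        Module.Basis.repr_self, Module.Basis.repr_self]
      ext i
      simp [Finsupp.single_apply]
    rw [hz2]
    exact Submodule.add_mem _
      (Submodule.smul_mem _ _ (Submodule.subset_span (by simp)))
      (Submodule.smul_mem _ _ (Submodule.subset_span (by simp)))
  · -- span ⊆ center
    rw [Submodule.span_le]
    rintro x hx
    simp only [Set.mem_insert_iff, Set.mem_singleton_iff] at hx
    have : x ∈ LieAlgebra.center ℂ sv := by
      rw [LieModule.mem_maxTrivSubmodule]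
      rcases hx with rfl | rfl
      · intro y
        have hT : (LieAlgebra.ad ℂ sv (A.M 0) : sv →ₗ[ℂ] sv) = 0 := by
          refine Module.Basis.ext (svBasis A) fun j => ?_
          simp only [LieAlgebra.ad_apply, LinearMap.zero_apply]
          cases j with
          | L n =>
              rw [svBasis_L, ← lie_skew, A.bracket_LM n 0]; simp
          | M n => rw [svBasis_M]; exact A.bracket_MM 0 n
          | Y n => rw [svBasis_Y]; exact A.bracket_MY 0 n
          | c => rw [svBasis_c]; exact A.bracket_c _
        have h2 := LinearMap.congr_fun hT y
        simp only [LieAlgebra.ad_apply, LinearMap.zero_apply] at h2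
        rw [← lie_skew, h2]; simp
      · intro y; exact A.bracket_c y
    exact this
end

section
/- The subspace M ⊕ Y ⊕ ℂc of 𝔰𝔳, where M = span_ℂ{M_n : n ∈ ℤ} and Y = span_ℂ{Y_{n+1/2} : n ∈ ℤ}, is an ideal of 𝔰𝔳, and it is the unique maximal proper ideal of 𝔰𝔳: every proper ideal of 𝔰𝔳 is contained in M ⊕ Y ⊕ ℂc. -/
variable {sv : Type*} [LieRing sv] [LieAlgebra ℂ sv]

set_option linter.unusedSectionVars false

/-- The basis function. -/
def SVAlgebra.B (A : SVAlgebra sv) : SVIndex → sv := fun i =>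
  match i with
  | .L n => A.L n
  | .M n => A.M n
  | .Y n => A.Y n
  | .c => A.c

lemma SVAlgebra.B_eq (A : SVAlgebra sv) : A.B = (fun i : SVIndex =>
    match i with
    | .L n => A.L n
    | .M n => A.M n
    | .Y n => A.Y n
    | .c => A.c) := rfl

noncomputable def SVAlgebra.bas (A : SVAlgebra sv) : Module.Basis SVIndex ℂ sv :=
  Module.Basis.mk A.indep (by rw [← A.B_eq, A.B_eq, A.span_top])

lemma SVAlgebra.bas_apply (A : SVAlgebra sv) (i : SVIndex) : A.bas i = A.B i :=
  Module.Basis.mk_apply _ _ _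

-- reversed brackets
lemma SVAlgebra.bracket_YM (A : SVAlgebra sv) (m n : ℤ) : ⁅A.Y m, A.M n⁆ = 0 := by
  rw [← lie_skew, A.bracket_MY, neg_zero]

lemma SVAlgebra.bracket_cx (A : SVAlgebra sv) (x : sv) : ⁅A.c, x⁆ = 0 := by
  rw [← lie_skew, A.bracket_c, neg_zero]

lemma SVAlgebra.bracket_ML (A : SVAlgebra sv) (m n : ℤ) :
    ⁅A.M m, A.L n⁆ = (-(m : ℂ)) • A.M (n + m) := by
  rw [← lie_skew, A.bracket_LM, neg_smul]

lemma SVAlgebra.bracket_YL (A : SVAlgebra sv) (m n : ℤ) :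
    ⁅A.Y m, A.L n⁆ = (-((m : ℂ) + (1 - (n : ℂ)) / 2)) • A.Y (n + m) := by
  rw [← lie_skew, A.bracket_LY, neg_smul]

lemma lie_finset_sum {ι : Type*} (x : sv) (s : Finset ι) (f : ι → sv) :
    ⁅x, ∑ i ∈ s, f i⁆ = ∑ i ∈ s, ⁅x, f i⁆ := by
  classical
  induction s using Finset.induction_on with
  | empty => simp
  | @insert a t ha ih => rw [Finset.sum_insert ha, Finset.sum_insert ha, lie_add, ih]

lemma eigen_extract (A : SVAlgebra sv) (J : LieIdeal ℂ sv)
    (s : Finset SVIndex) (lam : SVIndex → ℂ) (v : SVIndex → sv)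
    (hinj : ∀ i ∈ s, ∀ j ∈ s, lam i = lam j → i = j)
    (heig : ∀ i ∈ s, ⁅A.L 0, v i⁆ = lam i • v i)
    (hmem : (∑ i ∈ s, v i) ∈ J) : ∀ i ∈ s, v i ∈ J := by
  classical
  induction s using Finset.induction_on generalizing v with
  | empty => intro i hi; simp at hi
  | @insert a t ha ih =>
    have key : ∀ j ∈ t, v j ∈ J := by
      have h1 : ⁅A.L 0, ∑ i ∈ insert a t, v i⁆ - lam a • (∑ i ∈ insert a t, v i) ∈ J :=
        J.sub_mem (lie_mem_right ℂ sv J _ _ hmem) (J.smul_mem _ hmem)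
      have h2 : ⁅A.L 0, ∑ i ∈ insert a t, v i⁆ - lam a • (∑ i ∈ insert a t, v i)
          = ∑ i ∈ t, (lam i - lam a) • v i := by
        rw [lie_finset_sum, Finset.smul_sum, ← Finset.sum_sub_distrib]
        rw [Finset.sum_insert ha, heig a (Finset.mem_insert_self a t), sub_self]
        rw [zero_add]
        refine Finset.sum_congr rfl fun i hi => ?_
        rw [heig i (Finset.mem_insert_of_mem hi), ← sub_smul]
      rw [h2] at h1
      have ih' := ih (fun i => (lam i - lam a) • v i)
        (fun i hi j hj h => hinj i (Finset.mem_insert_of_mem hi) j (Finset.mem_insert_of_mem hj) h)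
        (fun i hi => by
          rw [lie_smul, heig i (Finset.mem_insert_of_mem hi), smul_comm])
        h1
      intro j hj
      have hne : lam j - lam a ≠ 0 := by
        intro h
        have : lam j = lam a := by linear_combination h
        exact ha ((hinj j (Finset.mem_insert_of_mem hj) a (Finset.mem_insert_self a t) this) ▸ hj)
      have := J.smul_mem (lam j - lam a)⁻¹ (ih' j hj)
      rwa [smul_smul, inv_mul_cancel₀ hne, one_smul] at this
    intro i hi
    rcases Finset.mem_insert.mp hi with rfl | hit
    · have hsum : ∑ j ∈ t, v j ∈ J := Submodule.sum_mem _ fun j hj => key j hj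
      have : v i = (∑ j ∈ insert i t, v j) - ∑ j ∈ t, v j := by
        rw [Finset.sum_insert ha]; abel
      rw [this]; exact J.sub_mem hmem hsum
    · exact key i hit

lemma smul_mem_cancel (J : LieIdeal ℂ sv) {cc : ℂ} (hcc : cc ≠ 0) {x : sv}
    (h : cc • x ∈ J) : x ∈ J := by
  have := J.smul_mem cc⁻¹ h
  rwa [smul_smul, inv_mul_cancel₀ hcc, one_smul] at this

lemma allM (A : SVAlgebra sv) (J : LieIdeal ℂ sv) (j0 : ℤ) (hj0 : j0 ≠ 0)
    (h : A.M j0 ∈ J) : ∀ j : ℤ, A.M j ∈ J := by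
  intro j
  have hb : ⁅A.L (j - j0), A.M j0⁆ ∈ J := lie_mem_right ℂ sv J _ _ h
  rw [A.bracket_LM, show j - j0 + j0 = j by ring] at hb
  exact smul_mem_cancel J (by exact_mod_cast hj0 : ((j0 : ℤ) : ℂ) ≠ 0) hb

lemma allY (A : SVAlgebra sv) (J : LieIdeal ℂ sv) (j0 : ℤ)
    (h : A.Y j0 ∈ J) : ∀ j : ℤ, A.Y j ∈ J := by
  have step : ∀ a : ℤ, A.Y a ∈ J → ∀ j : ℤ, j ≠ 3 * a + 1 → A.Y j ∈ J := by
    intro a ha j hj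
    have hb : ⁅A.L (j - a), A.Y a⁆ ∈ J := lie_mem_right ℂ sv J _ _ ha
    rw [A.bracket_LY, show j - a + a = j by ring] at hb
    refine smul_mem_cancel J ?_ hb
    intro hc
    push_cast at hc
    apply hj
    have h2 : (j : ℂ) = ((3 * a + 1 : ℤ) : ℂ) := by push_cast; linear_combination -2 * hc
    exact_mod_cast h2
  intro j
  by_cases hj : j = 3 * j0 + 1
  · exact step (j0 + 2) (step j0 h (j0 + 2) (by omega)) j (by omega)
  · exact step j0 h j hj

lemma allL (A : SVAlgebra sv) (J : LieIdeal ℂ sv) (j0 : ℤ) (hj0 : j0 ≠ 0)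
    (h : A.L j0 ∈ J) : (∀ j : ℤ, A.L j ∈ J) ∧ A.c ∈ J := by
  have step : ∀ a : ℤ, A.L a ∈ J → ∀ j : ℤ, j ≠ 0 → j ≠ 2 * a → A.L j ∈ J := by
    intro a ha j hj0' hj2
    have hb : ⁅A.L (j - a), A.L a⁆ ∈ J := lie_mem_right ℂ sv J _ _ ha
    rw [A.bracket_LL, show j - a + a = j by ring, if_neg hj0', zero_smul, add_zero] at hb
    refine smul_mem_cancel J ?_ hb
    intro hc
    push_cast at hc
    apply hj2
    have h2 : (j : ℂ) = ((2 * a : ℤ) : ℂ) := by push_cast; linear_combination -hc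
    exact_mod_cast h2
  have h3 : A.L (3 * j0) ∈ J := step j0 h (3 * j0) (by omega) (by omega)
  have h2j0 : A.L (2 * j0) ∈ J := step (3 * j0) h3 (2 * j0) (by omega) (by omega)
  have hLne : ∀ j : ℤ, j ≠ 0 → A.L j ∈ J := by
    intro j hj
    by_cases h' : j = 2 * j0
    · exact h' ▸ h2j0
    · exact step j0 h j hj h'
  have hLm1 : A.L (-1) ∈ J := hLne _ (by omega)
  have hb0 : ⁅A.L 1, A.L (-1)⁆ ∈ J := lie_mem_right ℂ sv J _ _ hLm1
  have hL0 : A.L 0 ∈ J := by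
    have e : ((-2⁻¹ : ℂ)) • ⁅A.L 1, A.L (-1)⁆ = A.L 0 := by
      rw [A.bracket_LL]
      norm_num
      module
    exact e ▸ J.smul_mem _ hb0
  have hLm2 : A.L (-2) ∈ J := hLne _ (by omega)
  have hb2 : ⁅A.L 2, A.L (-2)⁆ ∈ J := lie_mem_right ℂ sv J _ _ hLm2
  have hc : A.c ∈ J := by
    have e2 : (2 : ℂ) • ⁅A.L 2, A.L (-2)⁆ + (8 : ℂ) • A.L 0 = A.c := by
      rw [A.bracket_LL]
      norm_num
      module
    exact e2 ▸ J.add_mem (J.smul_mem _ hb2) (J.smul_mem _ hL0)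
  exact ⟨fun j => if h' : j = 0 then h' ▸ hL0 else hLne j h', hc⟩

lemma finset_sum_lie {ι : Type*} (s : Finset ι) (f : ι → sv) (y : sv) :
    ⁅∑ i ∈ s, f i, y⁆ = ∑ i ∈ s, ⁅f i, y⁆ := by
  classical
  induction s using Finset.induction_on with
  | empty => simp
  | @insert a t ha ih => rw [Finset.sum_insert ha, Finset.sum_insert ha, add_lie, ih]

lemma SVAlgebra.adL (A : SVAlgebra sv) (j : ℤ) : ⁅A.L 0, A.L j⁆ = (j : ℂ) • A.L j := by
  rw [A.bracket_LL]; norm_num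

lemma SVAlgebra.adM (A : SVAlgebra sv) (j : ℤ) : ⁅A.L 0, A.M j⁆ = (j : ℂ) • A.M j := by
  rw [A.bracket_LM, zero_add]

lemma SVAlgebra.adY (A : SVAlgebra sv) (j : ℤ) :
    ⁅A.L 0, A.Y j⁆ = ((j : ℂ) + 1 / 2) • A.Y j := by
  rw [A.bracket_LY, zero_add]; norm_num

lemma ideal_eq_top (A : SVAlgebra sv) (J : LieIdeal ℂ sv) (x : sv) (hxJ : x ∈ J)
    (n0 : ℤ) (hn0 : A.bas.repr x (.L n0) ≠ 0) : J = ⊤ := by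
  classical
  set r : SVIndex →₀ ℂ := A.bas.repr x with hr
  set t : Finset SVIndex := r.support with ht
  have hmemL : SVIndex.L n0 ∈ t := Finsupp.mem_support_iff.mpr hn0
  have hx : x = ∑ i ∈ t, r i • A.B i := by
    have h0 := A.bas.linearCombination_repr x
    rw [Finsupp.linearCombination_apply, Finsupp.sum] at h0
    rw [← h0]
    exact Finset.sum_congr rfl fun i _ => by rw [A.bas_apply]
  -- Step 1 : all M's belong to J
  have hMall : ∀ j : ℤ, A.M j ∈ J := by
    set k : ℤ := if n0 = -1 then 2 else 1 with hk
    have hk0 : k ≠ 0 := by simp only [hk]; split_ifs <;> omega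
    have hkn0 : n0 + k ≠ 0 := by simp only [hk]; split_ifs <;> omega
    set v : SVIndex → sv := fun i => r i • ⁅A.B i, A.M k⁆ with hv
    have hbrk : ⁅x, A.M k⁆ ∈ J := lie_mem_left ℂ sv J _ _ hxJ
    have hsum1 : ⁅x, A.M k⁆ = ∑ i ∈ t, v i := by
      rw [hx, finset_sum_lie]
      exact Finset.sum_congr rfl fun i _ => by rw [smul_lie]
    set pL : SVIndex → Prop := fun i => match i with | .L _ => True | _ => False with hpL
    have hvz : ∀ i, ¬ pL i → v i = 0 := by
      intro i hi
      cases i with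
      | L m => exact absurd trivial hi
      | M m => simp only [hv, SVAlgebra.B, A.bracket_MM, smul_zero]
      | Y m => simp only [hv, SVAlgebra.B, A.bracket_YM, smul_zero]
      | c => simp only [hv, SVAlgebra.B, A.bracket_cx, smul_zero]
    have hmem2 : ∑ i ∈ t.filter pL, v i ∈ J := by
      rw [Finset.sum_filter_of_ne (fun i _ hne => by
        by_contra hp; exact hne (hvz i hp)), ← hsum1]
      exact hbrk
    set lam : SVIndex → ℂ := fun i => match i with | .L m => (m : ℂ) + k | _ => 0 with hlam
    have hext := eigen_extract A J (t.filter pL) lam v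
      (by
        intro i hi j hj hij
        have hpi : pL i := (Finset.mem_filter.mp hi).2
        have hpj : pL j := (Finset.mem_filter.mp hj).2
        cases i with
        | L mi =>
          cases j with
          | L mj =>
            have : (mi : ℂ) = (mj : ℂ) := by
              simpa [hlam] using hij
            have : mi = mj := by exact_mod_cast this
            rw [this]
          | M mj => exact hpj.elim
          | Y mj => exact hpj.elim
          | c => exact hpj.elim
        | M mi => exact hpi.elim
        | Y mi => exact hpi.elim
        | c => exact hpi.elim)
      (by
        intro i hi
        have hpi : pL i := (Finset.mem_filter.mp hi).2
        cases i with
        | L m =>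
          rw [show lam (SVIndex.L m) = (m : ℂ) + k from rfl,
            show v (SVIndex.L m) = r (SVIndex.L m) • ⁅A.L m, A.M k⁆ from rfl,
            A.bracket_LM, lie_smul, lie_smul, A.adM]
          push_cast
          module
        | M m => exact hpi.elim
        | Y m => exact hpi.elim
        | c => exact hpi.elim)
      hmem2
    have hv0 : v (.L n0) ∈ J := hext _ (Finset.mem_filter.mpr ⟨hmemL, trivial⟩)
    have hv0' : (r (.L n0)) • ((k : ℂ)) • A.M (n0 + k) ∈ J := by
      simpa only [hv, SVAlgebra.B, A.bracket_LM] using hv0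
    have hM1 : A.M (n0 + k) ∈ J :=
      smul_mem_cancel J (by exact_mod_cast hk0 : ((k : ℤ) : ℂ) ≠ 0)
        (smul_mem_cancel J hn0 hv0')
    exact allM A J (n0 + k) hkn0 hM1
  -- Step 2 : all Y's belong to J
  have hYall : ∀ j : ℤ, A.Y j ∈ J := by
    set k : ℤ := if n0 = 1 then 1 else 0 with hk
    have hkco : 2 * k ≠ n0 - 1 := by simp only [hk]; split_ifs <;> omega
    set v : SVIndex → sv := fun i => r i • ⁅A.B i, A.Y k⁆ with hv
    have hbrk : ⁅x, A.Y k⁆ ∈ J := lie_mem_left ℂ sv J _ _ hxJ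
    have hsum1 : ⁅x, A.Y k⁆ = ∑ i ∈ t, v i := by
      rw [hx, finset_sum_lie]
      exact Finset.sum_congr rfl fun i _ => by rw [smul_lie]
    set pLY : SVIndex → Prop :=
      fun i => match i with | .L _ => True | .Y _ => True | _ => False with hpLY
    have hvz : ∀ i, ¬ pLY i → v i = 0 := by
      intro i hi
      cases i with
      | L m => exact absurd trivial hi
      | Y m => exact absurd trivial hi
      | M m => simp only [hv, SVAlgebra.B, A.bracket_MY, smul_zero]
      | c => simp only [hv, SVAlgebra.B, A.bracket_cx, smul_zero]
    have hmem2 : ∑ i ∈ t.filter pLY, v i ∈ J := by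
      rw [Finset.sum_filter_of_ne (fun i _ hne => by
        by_contra hp; exact hne (hvz i hp)), ← hsum1]
      exact hbrk
    set lam : SVIndex → ℂ := fun i =>
      match i with
      | .L m => (m : ℂ) + k + 1 / 2
      | .Y m => (m : ℂ) + k + 1
      | _ => 0 with hlam
    have castLY : ∀ mi mj : ℤ, (mi : ℂ) + k + 1 / 2 = (mj : ℂ) + k + 1 → False := by
      intro mi mj hij
      have h2 : ((2 * mi : ℤ) : ℂ) = ((2 * mj + 1 : ℤ) : ℂ) := by
        push_cast; linear_combination 2 * hij
      have : (2 * mi : ℤ) = 2 * mj + 1 := by exact_mod_cast h2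
      omega
    have hext := eigen_extract A J (t.filter pLY) lam v
      (by
        intro i hi j hj hij
        have hpi : pLY i := (Finset.mem_filter.mp hi).2
        have hpj : pLY j := (Finset.mem_filter.mp hj).2
        cases i with
        | L mi =>
          cases j with
          | L mj =>
            have : (mi : ℂ) = (mj : ℂ) := by
              have := hij
              simp only [hlam] at this
              linear_combination this
            have : mi = mj := by exact_mod_cast this
            rw [this]
          | Y mj =>
            exact absurd (by simpa [hlam] using hij) (fun h => castLY mi mj h)
          | M mj => exact hpj.elim
          | c => exact hpj.elim
        | Y mi =>
          cases j with
          | Y mj =>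
            have : (mi : ℂ) = (mj : ℂ) := by
              have := hij
              simp only [hlam] at this
              linear_combination this
            have : mi = mj := by exact_mod_cast this
            rw [this]
          | L mj =>
            exact absurd (by simpa [hlam] using hij.symm) (fun h => castLY mj mi h)
          | M mj => exact hpj.elim
          | c => exact hpj.elim
        | M mi => exact hpi.elim
        | c => exact hpi.elim)
      (by
        intro i hi
        have hpi : pLY i := (Finset.mem_filter.mp hi).2
        cases i with
        | L m =>
          rw [show lam (SVIndex.L m) = (m : ℂ) + k + 1 / 2 from rfl,
            show v (SVIndex.L m) = r (SVIndex.L m) • ⁅A.L m, A.Y k⁆ from rfl,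
            A.bracket_LY, lie_smul, lie_smul, A.adY]
          push_cast
          module
        | Y m =>
          rw [show lam (SVIndex.Y m) = (m : ℂ) + k + 1 from rfl,
            show v (SVIndex.Y m) = r (SVIndex.Y m) • ⁅A.Y m, A.Y k⁆ from rfl,
            A.bracket_YY, lie_smul, lie_smul, A.adM]
          push_cast
          module
        | M m => exact hpi.elim
        | c => exact hpi.elim)
      hmem2
    have hv0 : v (.L n0) ∈ J := hext _ (Finset.mem_filter.mpr ⟨hmemL, trivial⟩)
    have hv0' : (r (.L n0)) • ((k : ℂ) + (1 - (n0 : ℂ)) / 2) • A.Y (n0 + k) ∈ J := by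
      simpa only [hv, SVAlgebra.B, A.bracket_LY] using hv0
    have hcc : ((k : ℂ) + (1 - (n0 : ℂ)) / 2) ≠ 0 := by
      intro hcq
      apply hkco
      have h2 : ((2 * k : ℤ) : ℂ) = ((n0 - 1 : ℤ) : ℂ) := by
        push_cast; linear_combination 2 * hcq
      exact_mod_cast h2
    have hY1 : A.Y (n0 + k) ∈ J :=
      smul_mem_cancel J hcc (smul_mem_cancel J hn0 hv0')
    exact allY A J (n0 + k) hY1
  -- Step 3 : all L's and c belong to J
  have hLc : (∀ j : ℤ, A.L j ∈ J) ∧ A.c ∈ J := by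
    set N : ℕ := t.sup (fun i => match i with | .L m => m.natAbs | _ => 0) with hN
    set k : ℤ := (N : ℤ) + 1 with hk
    have hbig : ∀ m : ℤ, SVIndex.L m ∈ t → m.natAbs ≤ N := by
      intro m hm
      exact Finset.le_sup (f := fun i : SVIndex =>
        match i with | .L m => m.natAbs | _ => 0) hm
    set q : SVIndex → Prop :=
      fun i => match i with | .M _ => True | .Y _ => True | _ => False with hq
    set y : sv := x - ∑ i ∈ t.filter q, r i • A.B i with hy
    have hyJ : y ∈ J := by
      refine J.sub_mem hxJ (Submodule.sum_mem _ fun i hi => ?_)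
      have hqi : q i := (Finset.mem_filter.mp hi).2
      cases i with
      | M m => exact J.smul_mem _ (hMall m)
      | Y m => exact J.smul_mem _ (hYall m)
      | L m => exact hqi.elim
      | c => exact hqi.elim
    have hysum : y = ∑ i ∈ t.filter (fun i => ¬ q i), r i • A.B i := by
      rw [hy, hx, ← Finset.sum_filter_add_sum_filter_not t q (fun i => r i • A.B i)]
      abel
    set v : SVIndex → sv := fun i => r i • ⁅A.B i, A.L k⁆ with hv
    have hbrk : ⁅y, A.L k⁆ ∈ J := lie_mem_left ℂ sv J _ _ hyJ
    have hsum1 : ⁅y, A.L k⁆ = ∑ i ∈ t.filter (fun i => ¬ q i), v i := by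
      rw [hysum, finset_sum_lie]
      exact Finset.sum_congr rfl fun i _ => by rw [smul_lie]
    set lam : SVIndex → ℂ := fun i => match i with | .L m => (m : ℂ) + k | _ => 0 with hlam
    have hmem2 : ∑ i ∈ t.filter (fun i => ¬ q i), v i ∈ J := by rw [← hsum1]; exact hbrk
    have hext := eigen_extract A J (t.filter (fun i => ¬ q i)) lam v
      (by
        intro i hi j hj hij
        have hti : i ∈ t := (Finset.mem_filter.mp hi).1
        have htj : j ∈ t := (Finset.mem_filter.mp hj).1
        have hpi : ¬ q i := (Finset.mem_filter.mp hi).2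
        have hpj : ¬ q j := (Finset.mem_filter.mp hj).2
        have castL0 : ∀ m : ℤ, SVIndex.L m ∈ t → (m : ℂ) + k = 0 → False := by
          intro m hm hc0
          have hmN := hbig m hm
          have h2 : ((m + k : ℤ) : ℂ) = ((0 : ℤ) : ℂ) := by
            push_cast; linear_combination hc0
          have : m + k = 0 := by exact_mod_cast h2
          simp only [hk] at this
          omega
        cases i with
        | L mi =>
          cases j with
          | L mj =>
            have : (mi : ℂ) = (mj : ℂ) := by
              have := hij
              simp only [hlam] at this
              linear_combination this
            have : mi = mj := by exact_mod_cast this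
            rw [this]
          | c => exact absurd (by simpa [hlam] using hij) (fun h => castL0 mi hti h)
          | M mj => exact absurd trivial hpj
          | Y mj => exact absurd trivial hpj
        | c =>
          cases j with
          | L mj => exact absurd (by simpa [hlam] using hij.symm) (fun h => castL0 mj htj h)
          | c => rfl
          | M mj => exact absurd trivial hpj
          | Y mj => exact absurd trivial hpj
        | M mi => exact absurd trivial hpi
        | Y mi => exact absurd trivial hpi)
      (by
        intro i hi
        have hti : i ∈ t := (Finset.mem_filter.mp hi).1
        have hpi : ¬ q i := (Finset.mem_filter.mp hi).2
        cases i with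
        | L m =>
          have hmk : m + k ≠ 0 := by
            have := hbig m hti
            simp only [hk] at *
            omega
          rw [show lam (SVIndex.L m) = (m : ℂ) + k from rfl,
            show v (SVIndex.L m) = r (SVIndex.L m) • ⁅A.L m, A.L k⁆ from rfl,
            A.bracket_LL, if_neg hmk, zero_smul, add_zero, lie_smul, lie_smul, A.adL]
          push_cast
          module
        | c =>
          simp only [hv, hlam, SVAlgebra.B, A.bracket_cx, smul_zero, lie_zero, zero_smul]
        | M m => exact absurd trivial hpi
        | Y m => exact absurd trivial hpi)
      hmem2
    have hv0 : v (.L n0) ∈ J :=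
      hext _ (Finset.mem_filter.mpr ⟨hmemL, fun h => h.elim⟩)
    have hn0k : n0 + k ≠ 0 := by
      have := hbig n0 hmemL
      simp only [hk] at *
      omega
    have hv0' : (r (.L n0)) • ((k : ℂ) - (n0 : ℂ)) • A.L (n0 + k) ∈ J := by
      have := hv0
      simp only [hv, SVAlgebra.B, A.bracket_LL, if_neg hn0k, zero_smul, add_zero] at this
      exact this
    have hcc : (k : ℂ) - (n0 : ℂ) ≠ 0 := by
      intro hcq
      have h2 : ((k : ℤ) : ℂ) = ((n0 : ℤ) : ℂ) := by push_cast; linear_combination hcq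
      have hkn : k = n0 := by exact_mod_cast h2
      have := hbig n0 hmemL
      simp only [hk] at hkn
      omega
    have hL1 : A.L (n0 + k) ∈ J :=
      smul_mem_cancel J hcc (smul_mem_cancel J hn0 hv0')
    exact allL A J (n0 + k) hn0k hL1
  -- conclude
  have hall : ∀ i : SVIndex, A.B i ∈ J := by
    intro i
    cases i with
    | L m => exact hLc.1 m
    | M m => exact hMall m
    | Y m => exact hYall m
    | c => exact hLc.2
  have hspan : (⊤ : Submodule ℂ sv) ≤ (J : Submodule ℂ sv) := by
    rw [← A.span_top, ← A.B_eq]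
    refine Submodule.span_le.mpr ?_
    rintro _ ⟨i, rfl⟩
    exact (LieSubmodule.mem_toSubmodule J).mpr (hall i)
  have : (J : Submodule ℂ sv) = ⊤ := top_le_iff.mp hspan
  exact (LieSubmodule.toSubmodule_eq_top (N := J)).mp this

/-- `M ⊕ Y ⊕ ℂc` is an ideal of `𝔰𝔳`, and it is the unique maximal proper ideal:
every proper ideal is contained in it. -/
theorem sv_unique_maximal_ideal (A : SVAlgebra sv) :
    (∃ I : LieIdeal ℂ sv, (I : Submodule ℂ sv) =
        Submodule.span ℂ (Set.range A.M ∪ Set.range A.Y ∪ {A.c})) ∧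
    (∀ J : LieIdeal ℂ sv, J ≠ ⊤ →
        (J : Submodule ℂ sv) ≤
          Submodule.span ℂ (Set.range A.M ∪ Set.range A.Y ∪ {A.c})) := by
  classical
  set S : Submodule ℂ sv :=
    Submodule.span ℂ (Set.range A.M ∪ Set.range A.Y ∪ {A.c}) with hS
  have hMgen : ∀ n : ℤ, A.M n ∈ S :=
    fun n => Submodule.subset_span (Or.inl (Or.inl ⟨n, rfl⟩))
  have hYgen : ∀ n : ℤ, A.Y n ∈ S :=
    fun n => Submodule.subset_span (Or.inl (Or.inr ⟨n, rfl⟩))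
  have hcgen : A.c ∈ S :=
    Submodule.subset_span (Or.inr rfl)
  have key : ∀ g ∈ (Set.range A.M ∪ Set.range A.Y ∪ {A.c}), ∀ x : sv, ⁅x, g⁆ ∈ S := by
    rintro g ((⟨n, rfl⟩ | ⟨n, rfl⟩) | rfl) x
    · -- g = M n
      have hx : x ∈ Submodule.span ℂ (Set.range A.B) := by
        rw [A.B_eq, A.span_top]; trivial
      refine Submodule.span_induction (p := fun x _ => ⁅x, A.M n⁆ ∈ S) ?_ ?_ ?_ ?_ hx
      · rintro _ ⟨i, rfl⟩
        cases i with
        | L m =>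
          show ⁅A.L m, A.M n⁆ ∈ S
          rw [A.bracket_LM]
          exact S.smul_mem _ (hMgen _)
        | M m =>
          show ⁅A.M m, A.M n⁆ ∈ S
          rw [A.bracket_MM]
          exact S.zero_mem
        | Y m =>
          show ⁅A.Y m, A.M n⁆ ∈ S
          rw [A.bracket_YM]
          exact S.zero_mem
        | c =>
          show ⁅A.c, A.M n⁆ ∈ S
          rw [A.bracket_cx]
          exact S.zero_mem
      · show ⁅(0 : sv), A.M n⁆ ∈ S
        rw [zero_lie]; exact S.zero_mem
      · intro a b _ _ ha hb
        show ⁅a + b, A.M n⁆ ∈ S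
        rw [add_lie]; exact S.add_mem ha hb
      · intro cc a _ ha
        show ⁅cc • a, A.M n⁆ ∈ S
        rw [smul_lie]; exact S.smul_mem cc ha
    · -- g = Y n
      have hx : x ∈ Submodule.span ℂ (Set.range A.B) := by
        rw [A.B_eq, A.span_top]; trivial
      refine Submodule.span_induction (p := fun x _ => ⁅x, A.Y n⁆ ∈ S) ?_ ?_ ?_ ?_ hx
      · rintro _ ⟨i, rfl⟩
        cases i with
        | L m =>
          show ⁅A.L m, A.Y n⁆ ∈ S
          rw [A.bracket_LY]
          exact S.smul_mem _ (hYgen _)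
        | M m =>
          show ⁅A.M m, A.Y n⁆ ∈ S
          rw [A.bracket_MY]
          exact S.zero_mem
        | Y m =>
          show ⁅A.Y m, A.Y n⁆ ∈ S
          rw [A.bracket_YY]
          exact S.smul_mem _ (hMgen _)
        | c =>
          show ⁅A.c, A.Y n⁆ ∈ S
          rw [A.bracket_cx]
          exact S.zero_mem
      · show ⁅(0 : sv), A.Y n⁆ ∈ S
        rw [zero_lie]; exact S.zero_mem
      · intro a b _ _ ha hb
        show ⁅a + b, A.Y n⁆ ∈ S
        rw [add_lie]; exact S.add_mem ha hb
      · intro cc a _ ha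
        show ⁅cc • a, A.Y n⁆ ∈ S
        rw [smul_lie]; exact S.smul_mem cc ha
    · -- g = c
      rw [A.bracket_c]; exact S.zero_mem
  have hlie : ∀ (x m : sv), m ∈ S → ⁅x, m⁆ ∈ S := by
    intro x m hm
    refine Submodule.span_induction (p := fun m _ => ⁅x, m⁆ ∈ S)
      (fun g hg => key g hg x)
      (by show ⁅x, (0 : sv)⁆ ∈ S; rw [lie_zero]; exact S.zero_mem)
      (fun a b _ _ ha hb => by show ⁅x, a + b⁆ ∈ S; rw [lie_add]; exact S.add_mem ha hb)
      (fun cc a _ ha => by show ⁅x, cc • a⁆ ∈ S; rw [lie_smul]; exact S.smul_mem cc ha) hm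
  constructor
  · exact ⟨{ S with lie_mem := fun {x m} hm => hlie x m hm }, rfl⟩
  · intro J hJ xx hxx
    by_contra hxS
    have hex : ∃ n0 : ℤ, A.bas.repr xx (.L n0) ≠ 0 := by
      by_contra hno
      push_neg at hno
      apply hxS
      have h0 := A.bas.linearCombination_repr xx
      rw [Finsupp.linearCombination_apply, Finsupp.sum] at h0
      rw [← h0]
      refine S.sum_mem fun i hi => ?_
      have hri : A.bas.repr xx i ≠ 0 := Finsupp.mem_support_iff.mp hi
      cases i with
      | L m => exact absurd (hno m) hri
      | M m => exact S.smul_mem _ (by rw [A.bas_apply]; exact hMgen m)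
      | Y m => exact S.smul_mem _ (by rw [A.bas_apply]; exact hYgen m)
      | c => exact S.smul_mem _ (by rw [A.bas_apply]; exact hcgen)
    obtain ⟨n0, hn0⟩ := hex
    exact hJ (ideal_eq_top A J xx ((LieSubmodule.mem_toSubmodule J).mp hxx) n0 hn0)
end

section
/- For any conjugate-linear anti-involution θ of the Schrödinger–Virasoro Lie algebra 𝔰𝔳, θ maps the subspace M ⊕ Y onto itself, where M = span_ℂ{M_n : n ∈ ℤ} and Y = span_ℂ{Y_{n+1/2} : n ∈ ℤ}. -/
/-- A conjugate-linear anti-involution of a complex Lie algebra. -/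
structure ConjAntiInvolution (sv : Type*) [LieRing sv] [LieAlgebra ℂ sv] where
  toFun : sv → sv
  map_add' : ∀ x y : sv, toFun (x + y) = toFun x + toFun y
  map_smul' : ∀ (a : ℂ) (x : sv), toFun (a • x) = (starRingEnd ℂ a) • toFun x
  map_bracket' : ∀ x y : sv, toFun ⁅x, y⁆ = ⁅toFun y, toFun x⁆
  invol' : ∀ x : sv, toFun (toFun x) = x

namespace SVP
open Submodule

variable {sv : Type*} [LieRing sv] [LieAlgebra ℂ sv]

/-- bracket on the right as a linear map -/
def adr (y : sv) : sv →ₗ[ℂ] sv where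
  toFun x := ⁅x, y⁆
  map_add' a b := add_lie a b y
  map_smul' t x := smul_lie t x y

/-- bracket on the left as a linear map -/
def adl (x : sv) : sv →ₗ[ℂ] sv where
  toFun y := ⁅x, y⁆
  map_add' a b := lie_add x a b
  map_smul' t m := lie_smul t x m

variable (A : SVAlgebra sv)

noncomputable def bb : Module.Basis SVIndex ℂ sv := Module.Basis.mk A.indep (le_of_eq A.span_top.symm)

lemma bbL (n : ℤ) : bb A (.L n) = A.L n := by rw [bb, Module.Basis.mk_apply]
lemma bbM (n : ℤ) : bb A (.M n) = A.M n := by rw [bb, Module.Basis.mk_apply]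
lemma bbY (n : ℤ) : bb A (.Y n) = A.Y n := by rw [bb, Module.Basis.mk_apply]
lemma bbc : bb A .c = A.c := by rw [bb, Module.Basis.mk_apply]

def hMY : Submodule ℂ sv := span ℂ (Set.range A.M ∪ Set.range A.Y)
def hM : Submodule ℂ sv := span ℂ (Set.range A.M)
def KK : Submodule ℂ sv := span ℂ (Set.range A.M ∪ Set.range A.Y ∪ {A.c})

lemma M_mem_hMY (n : ℤ) : A.M n ∈ hMY A := subset_span (Or.inl ⟨n, rfl⟩)
lemma Y_mem_hMY (n : ℤ) : A.Y n ∈ hMY A := subset_span (Or.inr ⟨n, rfl⟩)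
lemma M_mem_hM (n : ℤ) : A.M n ∈ hM A := subset_span ⟨n, rfl⟩
lemma hM_le_hMY : hM A ≤ hMY A := span_mono Set.subset_union_left
lemma hMY_le_KK : hMY A ≤ KK A := span_mono Set.subset_union_left
lemma c_mem_KK : A.c ∈ KK A := subset_span (Or.inr rfl)
lemma M_mem_KK (n : ℤ) : A.M n ∈ KK A := hMY_le_KK A (M_mem_hMY A n)
lemma Y_mem_KK (n : ℤ) : A.Y n ∈ KK A := hMY_le_KK A (Y_mem_hMY A n)

lemma lie_c_left (x : sv) : ⁅A.c, x⁆ = 0 := by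
  rw [← lie_skew, A.bracket_c, neg_zero]

/-- extend a membership statement from basis elements to all `y` (bracket on the right). -/
lemma forall_lie_mem_right (p : Submodule ℂ sv) (x : sv)
    (hL : ∀ n, ⁅x, A.L n⁆ ∈ p) (hM' : ∀ n, ⁅x, A.M n⁆ ∈ p)
    (hY : ∀ n, ⁅x, A.Y n⁆ ∈ p) (hc : ⁅x, A.c⁆ ∈ p) :
    ∀ y, ⁅x, y⁆ ∈ p := by
  intro y
  have hy : y ∈ (⊤ : Submodule ℂ sv) := trivial
  rw [← A.span_top] at hy
  induction hy using span_induction with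
  | mem z hz =>
    obtain ⟨i, rfl⟩ := hz
    cases i with
    | L n => exact hL n
    | M n => exact hM' n
    | Y n => exact hY n
    | c => exact hc
  | zero => rw [lie_zero]; exact zero_mem _
  | add a b _ _ h1 h2 => rw [lie_add]; exact add_mem h1 h2
  | smul t a _ h => rw [lie_smul]; exact smul_mem _ _ h

lemma KK_lie_mem_hMY (x : sv) (hx : x ∈ KK A) : ∀ y, ⁅x, y⁆ ∈ hMY A := by
  induction hx using span_induction with
  | mem z hz =>
    rcases hz with (⟨n, rfl⟩ | ⟨n, rfl⟩) | hz
    · refine forall_lie_mem_right A _ _ (fun m => ?_) (fun m => ?_) (fun m => ?_) ?_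
      · rw [← lie_skew, A.bracket_LM]
        exact neg_mem (smul_mem _ _ (M_mem_hMY A _))
      · rw [← lie_skew, A.bracket_MM m n, neg_zero]; exact zero_mem _
      · rw [A.bracket_MY]; exact zero_mem _
      · rw [A.bracket_c]; exact zero_mem _
    · refine forall_lie_mem_right A _ _ (fun m => ?_) (fun m => ?_) (fun m => ?_) ?_
      · rw [← lie_skew, A.bracket_LY]
        exact neg_mem (smul_mem _ _ (Y_mem_hMY A _))
      · rw [← lie_skew, A.bracket_MY m n, neg_zero]; exact zero_mem _
      · rw [A.bracket_YY]; exact smul_mem _ _ (M_mem_hMY A _)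
      · rw [A.bracket_c]; exact zero_mem _
    · rcases hz with rfl
      intro y; rw [lie_c_left]; exact zero_mem _
  | zero => intro y; rw [zero_lie]; exact zero_mem _
  | add a b _ _ h1 h2 => intro y; rw [add_lie]; exact add_mem (h1 y) (h2 y)
  | smul t a _ h => intro y; rw [smul_lie]; exact smul_mem _ _ (h y)

lemma lie_KK_right (x y : sv) (hy : y ∈ KK A) : ⁅x, y⁆ ∈ hMY A := by
  rw [← lie_skew]
  exact neg_mem (KK_lie_mem_hMY A y hy x)

lemma forall_lie_mem_left (p : Submodule ℂ sv) (y : sv)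
    (hL : ∀ n, ⁅A.L n, y⁆ ∈ p) (hM' : ∀ n, ⁅A.M n, y⁆ ∈ p)
    (hY : ∀ n, ⁅A.Y n, y⁆ ∈ p) (hc : ⁅A.c, y⁆ ∈ p) :
    ∀ x : sv, ⁅x, y⁆ ∈ p := by
  intro x
  have hx : x ∈ (⊤ : Submodule ℂ sv) := trivial
  rw [← A.span_top] at hx
  induction hx using span_induction with
  | mem z hz =>
    obtain ⟨i, rfl⟩ := hz
    cases i with
    | L n => exact hL n
    | M n => exact hM' n
    | Y n => exact hY n
    | c => exact hc
  | zero => rw [zero_lie]; exact zero_mem _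
  | add a b _ _ h1 h2 => rw [add_lie]; exact add_mem h1 h2
  | smul t a _ h => rw [smul_lie]; exact smul_mem _ _ h

lemma lie_M_right_hM (n : ℤ) (z : sv) : ⁅z, A.M n⁆ ∈ hM A := by
  refine forall_lie_mem_left A _ _ (fun m => ?_) (fun m => ?_) (fun m => ?_) ?_ z
  · rw [A.bracket_LM]; exact smul_mem _ _ (M_mem_hM A _)
  · rw [A.bracket_MM]; exact zero_mem _
  · rw [← lie_skew, A.bracket_MY, neg_zero]; exact zero_mem _
  · rw [lie_c_left]; exact zero_mem _

lemma lie_hMY_Y (n : ℤ) (w : sv) (hw : w ∈ hMY A) : ⁅w, A.Y n⁆ ∈ hM A := by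
  induction hw using span_induction with
  | mem z hz =>
    rcases hz with ⟨m, rfl⟩ | ⟨m, rfl⟩
    · rw [A.bracket_MY]; exact zero_mem _
    · rw [A.bracket_YY]; exact smul_mem _ _ (M_mem_hM A _)
  | zero => rw [zero_lie]; exact zero_mem _
  | add a b _ _ h1 h2 => rw [add_lie]; exact add_mem h1 h2
  | smul t a _ h => rw [smul_lie]; exact smul_mem _ _ h

lemma lie_hM_Y (n : ℤ) (w : sv) (hw : w ∈ hM A) : ⁅w, A.Y n⁆ = 0 := by
  induction hw using span_induction with
  | mem z hz => obtain ⟨m, rfl⟩ := hz; exact A.bracket_MY m n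
  | zero => rw [zero_lie]
  | add a b _ _ h1 h2 => rw [add_lie, h1, h2, add_zero]
  | smul t a _ h => rw [smul_lie, h, smul_zero]

lemma lie_hM_M (n : ℤ) (w : sv) (hw : w ∈ hM A) : ⁅w, A.M n⁆ = 0 := by
  induction hw using span_induction with
  | mem z hz => obtain ⟨m, rfl⟩ := hz; exact A.bracket_MM m n
  | zero => rw [zero_lie]
  | add a b _ _ h1 h2 => rw [add_lie, h1, h2, add_zero]
  | smul t a _ h => rw [smul_lie, h, smul_zero]

lemma tripleY (n : ℤ) (z : sv) : ⁅⁅⁅z, A.Y n⁆, A.Y n⁆, A.Y n⁆ = 0 :=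
  lie_hM_Y A n _ (lie_hMY_Y A n _ (lie_KK_right A z _ (Y_mem_KK A n)))

lemma tripleM (n : ℤ) (z : sv) : ⁅⁅⁅z, A.M n⁆, A.M n⁆, A.M n⁆ = 0 := by
  rw [lie_hM_M A n _ (lie_M_right_hM A n z), zero_lie]


noncomputable def wb (f g : ℤ →₀ ℂ) : ℤ →₀ ℂ :=
  f.sum fun m cm => g.sum fun n dn => Finsupp.single (m + n) (cm * dn * ((n : ℂ) - (m : ℂ)))

noncomputable def cbv (f g : ℤ →₀ ℂ) : ℂ :=
  ∑ m ∈ f.support, ∑ n ∈ g.support,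
    f m * g n * (if m + n = 0 then ((m : ℂ) ^ 3 - (m : ℂ)) / 12 else 0)

lemma wb_apply (f g : ℤ →₀ ℂ) (j : ℤ) :
    wb f g j = ∑ m ∈ f.support, ∑ n ∈ g.support,
      (if m + n = j then f m * g n * ((n : ℂ) - (m : ℂ)) else 0) := by
  classical
  rw [wb]
  simp only [Finsupp.sum, Finsupp.finset_sum_apply, Finsupp.single_apply]

lemma wb_eq_zero {f g : ℤ →₀ ℂ} {N P : ℤ} (hf : ∀ n, N < n → f n = 0)
    (hg : ∀ n, P < n → g n = 0) (j : ℤ) (hj : N + P < j) : wb f g j = 0 := by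
  rw [wb_apply]
  refine Finset.sum_eq_zero fun m hm => Finset.sum_eq_zero fun n hn => ?_
  have h1 : m ≤ N := le_of_not_gt fun h' => (Finsupp.mem_support_iff.mp hm) (hf m h')
  have h2 : n ≤ P := le_of_not_gt fun h' => (Finsupp.mem_support_iff.mp hn) (hg n h')
  rw [if_neg (by omega)]

lemma wb_top {f g : ℤ →₀ ℂ} {N P : ℤ} (hf : ∀ n, N < n → f n = 0)
    (hg : ∀ n, P < n → g n = 0) :
    wb f g (N + P) = f N * g P * ((P : ℂ) - (N : ℂ)) := by
  classical
  rw [wb_apply]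
  have h1 : ∀ b ∈ f.support, b ≠ N →
      (∑ n ∈ g.support, if b + n = N + P then f b * g n * ((n : ℂ) - (b : ℂ)) else 0) = 0 := by
    intro b hb hbN
    refine Finset.sum_eq_zero fun n hn => ?_
    have hb' : b ≤ N := le_of_not_gt fun h' => (Finsupp.mem_support_iff.mp hb) (hf b h')
    have hn' : n ≤ P := le_of_not_gt fun h' => (Finsupp.mem_support_iff.mp hn) (hg n h')
    rw [if_neg (by omega)]
  have h2 : N ∉ f.support →
      (∑ n ∈ g.support, if N + n = N + P then f N * g n * ((n : ℂ) - (N : ℂ)) else 0) = 0 := by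
    intro h
    have hfN : f N = 0 := Finsupp.notMem_support_iff.mp h
    refine Finset.sum_eq_zero fun n hn => ?_
    split_ifs <;> simp [hfN]
  rw [Finset.sum_eq_single N h1 h2]
  have h3 : ∀ b ∈ g.support, b ≠ P →
      (if N + b = N + P then f N * g b * ((b : ℂ) - (N : ℂ)) else 0) = 0 := by
    intro b hb hbP
    rw [if_neg (by omega)]
  have h4 : P ∉ g.support →
      (if N + P = N + P then f N * g P * ((P : ℂ) - (N : ℂ)) else 0) = 0 := by
    intro h
    simp [Finsupp.notMem_support_iff.mp h]
  rw [Finset.sum_eq_single P h3 h4, if_pos rfl]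


noncomputable def Wl : (ℤ →₀ ℂ) →ₗ[ℂ] sv := Finsupp.linearCombination ℂ A.L

lemma Wl_single (n : ℤ) (v : ℂ) : Wl A (Finsupp.single n v) = v • A.L n := by
  rw [Wl, Finsupp.linearCombination_single]

lemma Wl_expand (f : ℤ →₀ ℂ) : Wl A f = ∑ m ∈ f.support, f m • A.L m := by
  rw [Wl, Finsupp.linearCombination_apply, Finsupp.sum]

lemma bracket_Wl (f g : ℤ →₀ ℂ) :
    ⁅Wl A f, Wl A g⁆ = Wl A (wb f g) + cbv f g • A.c := by
  classical
  have e1 : ⁅Wl A f, Wl A g⁆ = ∑ m ∈ f.support, f m • ⁅A.L m, Wl A g⁆ := by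
    rw [show ⁅Wl A f, Wl A g⁆ = adr (Wl A g) (Wl A f) from rfl, Wl_expand A f, map_sum]
    refine Finset.sum_congr rfl fun m _ => ?_
    rw [map_smul]
    rfl
  have e2 : ∀ m : ℤ, ⁅A.L m, Wl A g⁆ = ∑ n ∈ g.support, g n • ⁅A.L m, A.L n⁆ := by
    intro m
    rw [show ⁅A.L m, Wl A g⁆ = adl (A.L m) (Wl A g) from rfl, Wl_expand A g, map_sum]
    refine Finset.sum_congr rfl fun n _ => ?_
    rw [map_smul]
    rfl
  have e3 : Wl A (wb f g) =
      ∑ m ∈ f.support, ∑ n ∈ g.support, (f m * g n * ((n : ℂ) - (m : ℂ))) • A.L (m + n) := by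
    rw [wb, map_finsuppSum, Finsupp.sum]
    refine Finset.sum_congr rfl fun m _ => ?_
    rw [map_finsuppSum, Finsupp.sum]
    refine Finset.sum_congr rfl fun n _ => ?_
    rw [Wl_single]
  have e4 : cbv f g • A.c = ∑ m ∈ f.support, ∑ n ∈ g.support,
      (f m * g n * (if m + n = 0 then ((m : ℂ) ^ 3 - (m : ℂ)) / 12 else 0)) • A.c := by
    rw [cbv, Finset.sum_smul]
    refine Finset.sum_congr rfl fun m _ => ?_
    rw [Finset.sum_smul]
  rw [e1, e3, e4, ← Finset.sum_add_distrib]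
  refine Finset.sum_congr rfl fun m _ => ?_
  rw [e2, Finset.smul_sum, ← Finset.sum_add_distrib]
  refine Finset.sum_congr rfl fun n _ => ?_
  rw [A.bracket_LL, smul_add, smul_add, smul_smul, smul_smul, smul_smul, smul_smul]

lemma Linj : Function.Injective SVIndex.L := fun a b h => by injection h

lemma repr_Wl (f : ℤ →₀ ℂ) (j : ℤ) : (bb A).repr (Wl A f) (.L j) = f j := by
  have hcomp : A.L = (bb A) ∘ SVIndex.L := by
    funext n
    rw [Function.comp_apply, bbL]
  have : Wl A f = Finsupp.linearCombination ℂ (bb A) (Finsupp.mapDomain SVIndex.L f) := by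
    rw [Finsupp.linearCombination_mapDomain, Wl, hcomp]
  rw [this, Module.Basis.repr_linearCombination, Finsupp.mapDomain_apply Linj]

lemma repr_KK (w : sv) (hw : w ∈ KK A) (j : ℤ) : (bb A).repr w (.L j) = 0 := by
  classical
  induction hw using span_induction with
  | mem z hz =>
    rcases hz with (⟨n, rfl⟩ | ⟨n, rfl⟩) | hz
    · rw [← bbM, Module.Basis.repr_self, Finsupp.single_apply, if_neg (by simp)]
    · rw [← bbY, Module.Basis.repr_self, Finsupp.single_apply, if_neg (by simp)]
    · rcases hz with rfl
      rw [← bbc, Module.Basis.repr_self, Finsupp.single_apply, if_neg (by simp)]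
  | zero => rw [map_zero]; rfl
  | add a b _ _ h1 h2 => rw [map_add, Finsupp.add_apply, h1, h2, add_zero]
  | smul t a _ h => rw [map_smul, Finsupp.smul_apply, h, smul_zero]


lemma step (f g : ℤ →₀ ℂ) (γ : ℂ) (w w' : sv) (hw : w ∈ KK A) (hw' : w' ∈ KK A) :
    ∃ w'' ∈ KK A, ⁅Wl A f + w, Wl A g + γ • A.c + w'⁆
      = Wl A (wb f g) + cbv f g • A.c + w'' := by
  refine ⟨⁅Wl A f, w'⁆ + ⁅w, Wl A g + γ • A.c + w'⁆, ?_, ?_⟩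
  · exact add_mem (hMY_le_KK A (lie_KK_right A _ _ hw'))
      (hMY_le_KK A (KK_lie_mem_hMY A w hw _))
  · rw [add_lie, lie_add, lie_add, lie_smul, A.bracket_c, smul_zero, add_zero, bracket_Wl]
    abel

lemma key (u : sv) (hu : ∀ y : sv, ⁅u, ⁅u, ⁅u, y⁆⁆⁆ = 0) : u ∈ KK A := by
  classical
  set f : ℤ →₀ ℂ := Finsupp.comapDomain SVIndex.L ((bb A).repr u) Linj.injOn with hfdef
  have hfval : ∀ n : ℤ, f n = (bb A).repr u (.L n) := fun n => rfl
  have hw : u - Wl A f ∈ KK A := by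
    have hrepr : ∀ n : ℤ, (bb A).repr (u - Wl A f) (.L n) = 0 := by
      intro n
      rw [map_sub, Finsupp.sub_apply, repr_Wl, hfval, sub_self]
    set w := u - Wl A f with hwdef
    have hexp : w = ∑ i ∈ ((bb A).repr w).support, ((bb A).repr w) i • (bb A) i := by
      conv_lhs => rw [← (bb A).linearCombination_repr w]
      rw [Finsupp.linearCombination_apply, Finsupp.sum]
    rw [hexp]
    refine sum_mem fun i hi => ?_
    refine smul_mem _ _ ?_
    cases i with
    | L n => exact absurd (hrepr n) (Finsupp.mem_support_iff.mp hi)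
    | M n => rw [bbM]; exact M_mem_KK A n
    | Y n => rw [bbY]; exact Y_mem_KK A n
    | c => rw [bbc]; exact c_mem_KK A
  by_cases hf0 : f = 0
  · rw [hf0, map_zero, sub_zero] at hw
    exact hw
  exfalso
  have hne : f.support.Nonempty := Finsupp.support_nonempty_iff.mpr hf0
  set N := f.support.max' hne with hN
  have hfN : f N ≠ 0 := Finsupp.mem_support_iff.mp (f.support.max'_mem hne)
  have hbdd : ∀ n, N < n → f n = 0 := by
    intro n hn
    by_contra hc
    have := f.support.le_max' n (Finsupp.mem_support_iff.mpr hc)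
    omega
  set k : ℤ := 2 * (N.natAbs : ℤ) + 1 with hk
  have hkN : k ≠ N := by omega
  have hk0 : k ≠ 0 := by omega
  have hkNn : N + k ≠ 0 := by omega
  set δ : ℤ →₀ ℂ := Finsupp.single k 1 with hδ
  have hδbdd : ∀ n, k < n → δ n = 0 := by
    intro n hn
    rw [hδ, Finsupp.single_apply, if_neg (by omega)]
  have hLk : A.L k = Wl A δ + (0:ℂ) • A.c + 0 := by
    rw [hδ, Wl_single, one_smul, zero_smul, add_zero, add_zero]
  have hu' : u = Wl A f + (u - Wl A f) := by abel
  obtain ⟨w1, hw1, e1⟩ := step A f δ 0 (u - Wl A f) 0 hw (zero_mem _)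
  obtain ⟨w2, hw2, e2⟩ := step A f (wb f δ) (cbv f δ) (u - Wl A f) w1 hw hw1
  obtain ⟨w3, hw3, e3⟩ := step A f (wb f (wb f δ)) (cbv f (wb f δ)) (u - Wl A f) w2 hw hw2
  have c1 : ⁅u, A.L k⁆ = Wl A (wb f δ) + cbv f δ • A.c + w1 := by
    conv_lhs => rw [hu', hLk]
    exact e1
  have c2 : ⁅u, ⁅u, A.L k⁆⁆ = Wl A (wb f (wb f δ)) + cbv f (wb f δ) • A.c + w2 := by
    rw [c1]
    conv_lhs => rw [hu']
    exact e2
  have c3 : ⁅u, ⁅u, ⁅u, A.L k⁆⁆⁆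
      = Wl A (wb f (wb f (wb f δ))) + cbv f (wb f (wb f δ)) • A.c + w3 := by
    rw [c2]
    conv_lhs => rw [hu']
    exact e3
  have hzero : Wl A (wb f (wb f (wb f δ))) + cbv f (wb f (wb f δ)) • A.c + w3 = 0 := by
    rw [← c3]
    exact hu (A.L k)
  have h0 : wb f (wb f (wb f δ)) (N + (N + (N + k))) = 0 := by
    have := congrArg (fun v => (bb A).repr v (SVIndex.L (N + (N + (N + k))))) hzero
    simpa [map_add, map_smul, Finsupp.add_apply, Finsupp.smul_apply, repr_Wl,
      repr_KK A w3 hw3, repr_KK A A.c (c_mem_KK A)] using this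
  have t1bdd : ∀ n, N + k < n → wb f δ n = 0 := fun n hn => wb_eq_zero hbdd hδbdd n hn
  have t2bdd : ∀ n, N + (N + k) < n → wb f (wb f δ) n = 0 :=
    fun n hn => wb_eq_zero hbdd t1bdd n hn
  have t1 : wb f δ (N + k) = f N * 1 * ((k : ℂ) - (N : ℂ)) := by
    have h := wb_top hbdd hδbdd
    rwa [hδ, Finsupp.single_eq_same] at h
  have t2 : wb f (wb f δ) (N + (N + k))
      = f N * wb f δ (N + k) * (((N + k : ℤ) : ℂ) - (N : ℂ)) := wb_top hbdd t1bdd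
  have t3 : wb f (wb f (wb f δ)) (N + (N + (N + k)))
      = f N * wb f (wb f δ) (N + (N + k)) * (((N + (N + k) : ℤ) : ℂ) - (N : ℂ)) :=
    wb_top hbdd t2bdd
  rw [t3, t2, t1] at h0
  have d1 : ((k : ℂ) - (N : ℂ)) ≠ 0 := sub_ne_zero.mpr (by exact_mod_cast hkN)
  have d2 : (((N + k : ℤ) : ℂ) - (N : ℂ)) ≠ 0 := by
    have : (((N + k : ℤ) : ℂ) - (N : ℂ)) = (k : ℂ) := by push_cast; ring
    rw [this]
    exact_mod_cast hk0
  have d3 : (((N + (N + k) : ℤ) : ℂ) - (N : ℂ)) ≠ 0 := by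
    have : (((N + (N + k) : ℤ) : ℂ) - (N : ℂ)) = ((N : ℂ) + (k : ℂ)) := by push_cast; ring
    rw [this]
    exact_mod_cast hkNn
  exact (mul_ne_zero (mul_ne_zero hfN (mul_ne_zero
    (mul_ne_zero hfN (mul_ne_zero (mul_ne_zero hfN one_ne_zero) d1)) d2)) d3) h0


lemma theta_zero (θ : ConjAntiInvolution sv) : θ.toFun 0 = 0 := by
  have h := θ.map_smul' 0 0
  simpa using h

lemma theta_triple (θ : ConjAntiInvolution sv) (x : sv)
    (hx : ∀ z : sv, ⁅⁅⁅z, x⁆, x⁆, x⁆ = 0) :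
    ∀ y : sv, ⁅θ.toFun x, ⁅θ.toFun x, ⁅θ.toFun x, y⁆⁆⁆ = 0 := by
  intro y
  have hy : y = θ.toFun (θ.toFun y) := (θ.invol' y).symm
  rw [hy, ← θ.map_bracket', ← θ.map_bracket', ← θ.map_bracket', hx, theta_zero]

lemma thetaY_KK (θ : ConjAntiInvolution sv) (n : ℤ) : θ.toFun (A.Y n) ∈ KK A :=
  key A _ (theta_triple θ _ (fun z => tripleY A n z))

lemma thetaM_KK (θ : ConjAntiInvolution sv) (n : ℤ) : θ.toFun (A.M n) ∈ KK A :=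
  key A _ (theta_triple θ _ (fun z => tripleM A n z))

lemma theta_Y_mem (θ : ConjAntiInvolution sv) (n : ℤ) : θ.toFun (A.Y n) ∈ hMY A := by
  have hc : ((n : ℂ) + 1/2) ≠ 0 := by
    intro h
    have h2 : ((2 * n + 1 : ℤ) : ℂ) = 0 := by push_cast; linear_combination 2 * h
    have h3 : (2 * n + 1 : ℤ) = 0 := by exact_mod_cast h2
    omega
  have hco : ((n : ℂ) + (1 - ((0 : ℤ) : ℂ)) / 2) = (n : ℂ) + 1/2 := by push_cast; ring
  have hbr : A.Y n = ((n : ℂ) + 1/2)⁻¹ • ⁅A.L 0, A.Y n⁆ := by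
    rw [A.bracket_LY, zero_add, hco, smul_smul, inv_mul_cancel₀ hc, one_smul]
  have hth : θ.toFun (A.Y n)
      = (starRingEnd ℂ (((n : ℂ) + 1/2)⁻¹)) • ⁅θ.toFun (A.Y n), θ.toFun (A.L 0)⁆ := by
    conv_lhs => rw [hbr]
    rw [θ.map_smul', θ.map_bracket']
  rw [hth]
  exact smul_mem _ _ (KK_lie_mem_hMY A _ (thetaY_KK A θ n) _)

lemma theta_M_mem (θ : ConjAntiInvolution sv) (n : ℤ) : θ.toFun (A.M n) ∈ hMY A := by
  by_cases h0 : n = 0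
  · subst h0
    have hbr : A.M 0 = ⁅A.Y (-1), A.Y 0⁆ := by
      rw [A.bracket_YY]
      norm_num
    have hth : θ.toFun (A.M 0) = ⁅θ.toFun (A.Y 0), θ.toFun (A.Y (-1))⁆ := by
      conv_lhs => rw [hbr]
      exact θ.map_bracket' _ _
    rw [hth]
    exact KK_lie_mem_hMY A _ (thetaY_KK A θ 0) _
  · have hc : ((n : ℂ)) ≠ 0 := Int.cast_ne_zero.mpr h0
    have hbr : A.M n = ((n : ℂ))⁻¹ • ⁅A.L 0, A.M n⁆ := by
      rw [A.bracket_LM, zero_add, smul_smul, inv_mul_cancel₀ hc, one_smul]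
    have hth : θ.toFun (A.M n)
        = (starRingEnd ℂ (((n : ℂ))⁻¹)) • ⁅θ.toFun (A.M n), θ.toFun (A.L 0)⁆ := by
      conv_lhs => rw [hbr]
      rw [θ.map_smul', θ.map_bracket']
    rw [hth]
    exact smul_mem _ _ (KK_lie_mem_hMY A _ (thetaM_KK A θ n) _)

lemma theta_maps_hMY (θ : ConjAntiInvolution sv) (x : sv) (hx : x ∈ hMY A) :
    θ.toFun x ∈ hMY A := by
  induction hx using span_induction with
  | mem z hz =>
    rcases hz with ⟨n, rfl⟩ | ⟨n, rfl⟩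
    · exact theta_M_mem A θ n
    · exact theta_Y_mem A θ n
  | zero => rw [theta_zero]; exact zero_mem _
  | add a b _ _ h1 h2 => rw [θ.map_add']; exact add_mem h1 h2
  | smul t a _ h => rw [θ.map_smul']; exact smul_mem _ _ h

end SVP

variable {sv : Type*} [LieRing sv] [LieAlgebra ℂ sv]

/-- Any conjugate-linear anti-involution of `𝔰𝔳` maps `M ⊕ Y` onto itself. -/
theorem sv_antiInvolution_preserves_MY (A : SVAlgebra sv) (θ : ConjAntiInvolution sv) :
    θ.toFun '' ↑(Submodule.span ℂ (Set.range A.M ∪ Set.range A.Y)) =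
      ↑(Submodule.span ℂ (Set.range A.M ∪ Set.range A.Y)) := by
  ext x
  simp only [Set.mem_image, SetLike.mem_coe]
  constructor
  · rintro ⟨y, hy, rfl⟩
    exact SVP.theta_maps_hMY A θ y hy
  · intro hx
    exact ⟨θ.toFun x, SVP.theta_maps_hMY A θ x hx, θ.invol' x⟩
end

section
/- For any conjugate-linear anti-involution θ of the Schrödinger–Virasoro Lie algebra 𝔰𝔳, there exist complex numbers λ, μ with |λ| = |μ| = 1 and λ' ∈ ℂ such that θ(c) = λ·c + λ'·M₀ and θ(M₀) = μ·M₀. -/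
variable {sv : Type*} [LieRing sv] [LieAlgebra ℂ sv]

open Finset

lemma sum_invol (U : Finset ℤ) (σ : ℤ → ℤ) (hσ : ∀ m, σ (σ m) = m)
    (t : ℤ → ℂ) (ht0 : ∀ m ∉ U, t m = 0) (hts : ∀ m, t (σ m) = - t m) :
    ∑ m ∈ U, t m = 0 := by
  classical
  set V : Finset ℤ := U ∪ U.image σ with hV
  have hUV : ∑ m ∈ U, t m = ∑ m ∈ V, t m := by
    refine Finset.sum_subset Finset.subset_union_left ?_
    intro x _ hx; exact ht0 x hx
  have hmem : ∀ m ∈ V, σ m ∈ V := by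
    intro m hm
    rcases Finset.mem_union.mp hm with h | h
    · exact Finset.mem_union_right _ (Finset.mem_image_of_mem σ h)
    · rcases Finset.mem_image.mp h with ⟨u, hu, rfl⟩
      rw [hσ]; exact Finset.mem_union_left _ hu
  have hneg : ∑ m ∈ V, t m = ∑ m ∈ V, - t m := by
    refine Finset.sum_nbij' (i := σ) (j := σ) hmem hmem (fun a _ => hσ a) (fun a _ => hσ a) ?_
    intro x _
    have := hts (σ x); rw [hσ] at this
    simpa using this
  rw [Finset.sum_neg_distrib] at hneg
  have h2 : (2:ℂ) * ∑ m ∈ V, t m = 0 := by linear_combination hneg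
  have h0 : ∑ m ∈ V, t m = 0 := by
    rcases mul_eq_zero.mp h2 with h | h
    · norm_num at h
    · exact h
  rw [hUV, h0]

lemma conv_self (a : ℤ → ℂ) (U : Finset ℤ) (k : ℤ) (ha : ∀ m ∉ U, a m = 0) :
    ∑ m ∈ U, ((k:ℂ) - 2*(m:ℂ)) * a m * a (k - m) = 0 := by
  refine sum_invol U (fun m => k - m) (by intro m; ring)
    (fun m => ((k:ℂ) - 2*(m:ℂ)) * a m * a (k - m)) ?_ ?_
  · intro m hm; have := ha m hm; simp [this]
  · intro m
    have h1 : k - (k - m) = m := by ring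
    simp only [h1]
    push_cast; ring

lemma odd_self (a : ℤ → ℂ) (U : Finset ℤ) (ha : ∀ m ∉ U, a m = 0) :
    ∑ m ∈ U, (((m:ℂ)^3 - (m:ℂ))/12) * a m * a (-m) = 0 := by
  refine sum_invol U (fun m => - m) (by intro m; ring)
    (fun m => (((m:ℂ)^3 - (m:ℂ))/12) * a m * a (-m)) ?_ ?_
  · intro m hm; have := ha m hm; simp [this]
  · intro m
    have h1 : -(-m) = m := by ring
    simp only [h1]
    push_cast; ring

lemma conv_top (a b : ℤ → ℂ) (S : Finset ℤ) (ha : ∀ m ∉ S, a m = 0)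
    (hconv : ∀ k : ℤ, ∑ m ∈ S, ((k:ℂ) - 2*(m:ℂ)) * a m * b (k - m) = 0)
    (N P : ℤ) (haN : a N ≠ 0) (haT : ∀ m, N < m → a m = 0)
    (hbP : b P ≠ 0) (hbT : ∀ n, P < n → b n = 0) : P = N := by
  have hNS : N ∈ S := by by_contra h; exact haN (ha N h)
  have hc := hconv (N + P)
  rw [Finset.sum_eq_single_of_mem N hNS ?_] at hc
  · have h1 : N + P - N = P := by ring
    rw [h1] at hc
    have h2 : (((N+P : ℤ)):ℂ) - 2*(N:ℂ) = (P:ℂ) - N := by push_cast; ring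
    rw [h2] at hc
    have h3 : (P:ℂ) - N = 0 := by
      rcases mul_eq_zero.mp hc with h | h
      · rcases mul_eq_zero.mp h with h' | h'
        · exact h'
        · exact absurd h' haN
      · exact absurd h hbP
    have : (P:ℂ) = N := by linear_combination h3
    exact_mod_cast this
  · intro m _ hmN
    rcases lt_or_gt_of_ne hmN with h | h
    · have : P < N + P - m := by omega
      rw [hbT _ this]; ring
    · rw [haT _ h]; ring

lemma comb_main (a b : ℤ → ℂ) (S T : Finset ℤ)
    (ha : ∀ m ∉ S, a m = 0) (hb : ∀ n ∉ T, b n = 0)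
    (hconv : ∀ k : ℤ, ∑ m ∈ S, ((k:ℂ) - 2*(m:ℂ)) * a m * b (k - m) = 0) :
    ∑ m ∈ S, (((m:ℂ)^3 - (m:ℂ))/12) * a m * b (-m) = 0 := by
  classical
  by_cases hA : ∀ m, a m = 0
  · exact Finset.sum_eq_zero (fun m _ => by rw [hA m]; ring)
  by_cases hB : ∀ n, b n = 0
  · exact Finset.sum_eq_zero (fun m _ => by rw [hB (-m)]; ring)
  push_neg at hA hB
  obtain ⟨m0, hm0⟩ := hA
  obtain ⟨n0, hn0⟩ := hB
  have hSA : (S.filter (fun m => a m ≠ 0)).Nonempty :=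
    ⟨m0, Finset.mem_filter.mpr ⟨by by_contra h; exact hm0 (ha m0 h), hm0⟩⟩
  set N := (S.filter (fun m => a m ≠ 0)).max' hSA with hN
  have haN : a N ≠ 0 := (Finset.mem_filter.mp ((S.filter (fun m => a m ≠ 0)).max'_mem hSA)).2
  have haT : ∀ m, N < m → a m = 0 := by
    intro m hm; by_contra h
    have : m ∈ S.filter (fun m => a m ≠ 0) :=
      Finset.mem_filter.mpr ⟨by by_contra h'; exact h (ha m h'), h⟩
    exact absurd (Finset.le_max' _ m this) (not_le.mpr hm)
  have hTB : (T.filter (fun n => b n ≠ 0)).Nonempty :=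
    ⟨n0, Finset.mem_filter.mpr ⟨by by_contra h; exact hn0 (hb n0 h), hn0⟩⟩
  set P := (T.filter (fun n => b n ≠ 0)).max' hTB with hP
  have hbP : b P ≠ 0 := (Finset.mem_filter.mp ((T.filter (fun n => b n ≠ 0)).max'_mem hTB)).2
  have hbT : ∀ n, P < n → b n = 0 := by
    intro n hn; by_contra h
    have : n ∈ T.filter (fun n => b n ≠ 0) :=
      Finset.mem_filter.mpr ⟨by by_contra h'; exact h (hb n h'), h⟩
    exact absurd (Finset.le_max' _ n this) (not_le.mpr hn)
  have hPN : P = N := conv_top a b S ha hconv N P haN haT hbP hbT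
  set lam := b N / a N with hlam
  set b' : ℤ → ℂ := fun n => b n - lam * a n with hb'
  have hb'0 : ∀ n ∉ S ∪ T, b' n = 0 := by
    intro n hn
    simp only [Finset.mem_union, not_or] at hn
    simp [hb', ha n hn.1, hb n hn.2]
  have hconv' : ∀ k : ℤ, ∑ m ∈ S, ((k:ℂ) - 2*(m:ℂ)) * a m * b' (k - m) = 0 := by
    intro k
    have hterm : ∀ m ∈ S, ((k:ℂ) - 2*(m:ℂ)) * a m * b' (k - m)
        = ((k:ℂ) - 2*(m:ℂ)) * a m * b (k - m)
          - lam * (((k:ℂ) - 2*(m:ℂ)) * a m * a (k - m)) := by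
      intro m _; simp only [hb']; ring
    rw [Finset.sum_congr rfl hterm, Finset.sum_sub_distrib, hconv k, ← Finset.mul_sum,
      conv_self a S k ha]
    ring
  have hb'all : ∀ n, b' n = 0 := by
    by_contra h
    push_neg at h
    obtain ⟨q0, hq0⟩ := h
    have hQB : (((S ∪ T)).filter (fun n => b' n ≠ 0)).Nonempty :=
      ⟨q0, Finset.mem_filter.mpr ⟨by by_contra h'; exact hq0 (hb'0 q0 h'), hq0⟩⟩
    set Q := ((S ∪ T).filter (fun n => b' n ≠ 0)).max' hQB with hQ
    have hbQ : b' Q ≠ 0 := (Finset.mem_filter.mp (Finset.max'_mem _ hQB)).2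
    have hbQT : ∀ n, Q < n → b' n = 0 := by
      intro n hn; by_contra h'
      have : n ∈ (S ∪ T).filter (fun n => b' n ≠ 0) :=
        Finset.mem_filter.mpr ⟨by by_contra h''; exact h' (hb'0 n h''), h'⟩
      exact absurd (Finset.le_max' _ n this) (not_le.mpr hn)
    have hQN : Q = N := conv_top a b' S ha hconv' N Q haN haT hbQ hbQT
    apply hbQ
    rw [hQN]
    simp only [hb', hlam]
    field_simp
    ring
  have hterm2 : ∀ m ∈ S, (((m:ℂ)^3 - (m:ℂ))/12) * a m * b (-m)
      = lam * ((((m:ℂ)^3 - (m:ℂ))/12) * a m * a (-m)) := by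
    intro m _
    have := hb'all (-m)
    simp only [hb'] at this
    have hbm : b (-m) = lam * a (-m) := by linear_combination this
    rw [hbm]; ring
  rw [Finset.sum_congr rfl hterm2, ← Finset.mul_sum, odd_self a S ha]
  ring

namespace SVAlgebra

noncomputable def basis (A : SVAlgebra sv) : Module.Basis SVIndex ℂ sv :=
  Module.Basis.mk A.indep (le_of_eq A.span_top.symm)

@[simp] lemma basis_L (A : SVAlgebra sv) (n : ℤ) : A.basis (.L n) = A.L n := by
  simp [basis, Module.Basis.mk_apply]

@[simp] lemma basis_M (A : SVAlgebra sv) (n : ℤ) : A.basis (.M n) = A.M n := by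
  simp [basis, Module.Basis.mk_apply]

@[simp] lemma basis_Y (A : SVAlgebra sv) (n : ℤ) : A.basis (.Y n) = A.Y n := by
  simp [basis, Module.Basis.mk_apply]

@[simp] lemma basis_c (A : SVAlgebra sv) : A.basis .c = A.c := by
  simp [basis, Module.Basis.mk_apply]

/-- the bracket as a bilinear map -/
def br : sv →ₗ[ℂ] sv →ₗ[ℂ] sv :=
  LinearMap.mk₂ ℂ (fun x y => ⁅x, y⁆) add_lie smul_lie lie_add lie_smul

@[simp] lemma br_apply (x y : sv) : br x y = ⁅x, y⁆ := rfl

/-- reversed bracket relations -/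
lemma bracket_ML_s5 (A : SVAlgebra sv) (m n : ℤ) :
    ⁅A.M m, A.L n⁆ = -((m : ℂ) • A.M (n + m)) := by
  rw [← lie_skew, A.bracket_LM]
lemma bracket_YL_s5 (A : SVAlgebra sv) (m n : ℤ) :
    ⁅A.Y m, A.L n⁆ = -(((m : ℂ) + (1 - (n : ℂ)) / 2) • A.Y (n + m)) := by
  rw [← lie_skew, A.bracket_LY]
lemma bracket_YM_s5 (A : SVAlgebra sv) (m n : ℤ) : ⁅A.Y m, A.M n⁆ = 0 := by
  rw [← lie_skew, A.bracket_MY]; simp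
lemma bracket_cX (A : SVAlgebra sv) (x : sv) : ⁅A.c, x⁆ = 0 := by
  rw [← lie_skew, A.bracket_c]; simp

end SVAlgebra

namespace SVAlgebra

/-- weight/dual index functions for the c-coefficient form -/
noncomputable def wtc : SVIndex → ℂ := fun i => match i with
  | .L m => ((m:ℂ)^3 - (m:ℂ))/12
  | _ => 0

def dualc : SVIndex → SVIndex := fun i => match i with
  | .L m => .L (-m)
  | _ => .c

noncomputable def wtL (k : ℤ) : SVIndex → ℂ := fun i => match i with
  | .L m => (k:ℂ) - 2*(m:ℂ)
  | _ => 0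

def dualL (k : ℤ) : SVIndex → SVIndex := fun i => match i with
  | .L m => .L (k - m)
  | _ => .c

/-- a generic "convolution" bilinear form built from basis coordinates -/
noncomputable def cForm (A : SVAlgebra sv) (w : SVIndex → ℂ) (d : SVIndex → SVIndex) :
    sv →ₗ[ℂ] sv →ₗ[ℂ] ℂ :=
  LinearMap.mk₂ ℂ
    (fun x y => (A.basis.repr x).sum fun i a => w i * a * (A.basis.repr y (d i)))
    (by
      intro x x' y
      rw [map_add, Finsupp.sum_add_index' (by intro i; ring) (by intro i b₁ b₂; ring)])
    (by
      intro t x y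
      rw [map_smul, Finsupp.sum_smul_index (by intro i; ring), smul_eq_mul, Finsupp.mul_sum]
      refine Finsupp.sum_congr ?_
      intro i _; ring)
    (by
      intro x y y'
      rw [← Finsupp.sum_add]
      refine Finsupp.sum_congr ?_
      intro i _
      rw [map_add, Finsupp.add_apply]; ring)
    (by
      intro t x y
      rw [smul_eq_mul, Finsupp.mul_sum]
      refine Finsupp.sum_congr ?_
      intro i _
      rw [map_smul, Finsupp.smul_apply, smul_eq_mul]; ring)

lemma cForm_apply (A : SVAlgebra sv) (w : SVIndex → ℂ) (d : SVIndex → SVIndex) (x y : sv) :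
    cForm A w d x y = (A.basis.repr x).sum fun i a => w i * a * (A.basis.repr y (d i)) := rfl

lemma cForm_basis_eq (A : SVAlgebra sv) (w : SVIndex → ℂ) (d : SVIndex → SVIndex)
    (i j : SVIndex) (h : d i = j) :
    cForm A w d (A.basis i) (A.basis j) = w i := by
  classical
  rw [cForm_apply, A.basis.repr_self, A.basis.repr_self]
  rw [Finsupp.sum_single_index (by ring), Finsupp.single_apply, if_pos h.symm]
  ring

lemma cForm_basis_ne (A : SVAlgebra sv) (w : SVIndex → ℂ) (d : SVIndex → SVIndex)
    (i j : SVIndex) (h : d i ≠ j) :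
    cForm A w d (A.basis i) (A.basis j) = 0 := by
  classical
  rw [cForm_apply, A.basis.repr_self, A.basis.repr_self]
  rw [Finsupp.sum_single_index (by ring), Finsupp.single_apply,
    if_neg (fun hh => h hh.symm)]
  ring


@[simp] lemma repr_L (A : SVAlgebra sv) (n : ℤ) :
    A.basis.repr (A.L n) = Finsupp.single (SVIndex.L n) 1 := by
  rw [← basis_L, A.basis.repr_self]
@[simp] lemma repr_M (A : SVAlgebra sv) (n : ℤ) :
    A.basis.repr (A.M n) = Finsupp.single (SVIndex.M n) 1 := by
  rw [← basis_M, A.basis.repr_self]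
@[simp] lemma repr_Y (A : SVAlgebra sv) (n : ℤ) :
    A.basis.repr (A.Y n) = Finsupp.single (SVIndex.Y n) 1 := by
  rw [← basis_Y, A.basis.repr_self]
@[simp] lemma repr_c (A : SVAlgebra sv) :
    A.basis.repr A.c = Finsupp.single SVIndex.c 1 := by
  rw [← basis_c, A.basis.repr_self]

lemma cForm_basis_zero (A : SVAlgebra sv) (w : SVIndex → ℂ) (d : SVIndex → SVIndex)
    (i j : SVIndex) (h : w i = 0) :
    cForm A w d (A.basis i) (A.basis j) = 0 := by
  classical
  by_cases hd : d i = j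
  · rw [cForm_basis_eq A w d i j hd, h]
  · exact cForm_basis_ne A w d i j hd

/-- c-coefficient of a bracket equals the omega form -/
lemma coord_bracket_c (A : SVAlgebra sv) (x y : sv) :
    A.basis.repr ⁅x, y⁆ SVIndex.c = cForm A wtc dualc x y := by
  classical
  have key : (br : sv →ₗ[ℂ] sv →ₗ[ℂ] sv).compr₂ (A.basis.coord SVIndex.c)
      = cForm A wtc dualc := by
    refine A.basis.ext fun i => A.basis.ext fun j => ?_
    simp only [LinearMap.compr₂_apply, br_apply, Module.Basis.coord_apply]
    rcases i with m | m | m | _ <;> rcases j with n | n | n | _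
    case L.L =>
      by_cases h : n = -m
      · rw [cForm_basis_eq A wtc dualc (.L m) (.L n) (by simp [dualc, h])]
        subst h
        simp [A.bracket_LL, Finsupp.single_apply, wtc]
      · rw [cForm_basis_ne A wtc dualc (.L m) (.L n)
          (by simp only [dualc, ne_eq, SVIndex.L.injEq]; omega)]
        have hmn : ¬ (m + n = 0) := by omega
        simp [A.bracket_LL, hmn, Finsupp.single_apply]
    case L.M =>
      rw [cForm_basis_ne A wtc dualc (.L m) (.M n) (by simp [dualc])]
      simp [A.bracket_LM, Finsupp.single_apply]
    case L.Y =>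
      rw [cForm_basis_ne A wtc dualc (.L m) (.Y n) (by simp [dualc])]
      simp [A.bracket_LY, Finsupp.single_apply]
    case L.c =>
      rw [cForm_basis_ne A wtc dualc (.L m) .c (by simp [dualc])]
      simp [A.bracket_c]
    case M.L =>
      rw [cForm_basis_zero A wtc dualc (.M m) (.L n) (by simp [wtc])]
      simp [A.bracket_ML_s5, Finsupp.single_apply]
    case M.M =>
      rw [cForm_basis_zero A wtc dualc (.M m) (.M n) (by simp [wtc])]
      simp [A.bracket_MM]
    case M.Y =>
      rw [cForm_basis_zero A wtc dualc (.M m) (.Y n) (by simp [wtc])]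
      simp [A.bracket_MY]
    case M.c =>
      rw [cForm_basis_zero A wtc dualc (.M m) .c (by simp [wtc])]
      simp [A.bracket_c]
    case Y.L =>
      rw [cForm_basis_zero A wtc dualc (.Y m) (.L n) (by simp [wtc])]
      simp [A.bracket_YL_s5, Finsupp.single_apply]
    case Y.M =>
      rw [cForm_basis_zero A wtc dualc (.Y m) (.M n) (by simp [wtc])]
      simp [A.bracket_YM_s5]
    case Y.Y =>
      rw [cForm_basis_zero A wtc dualc (.Y m) (.Y n) (by simp [wtc])]
      simp [A.bracket_YY, Finsupp.single_apply]
    case Y.c =>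
      rw [cForm_basis_zero A wtc dualc (.Y m) .c (by simp [wtc])]
      simp [A.bracket_c]
    case c.L =>
      rw [cForm_basis_zero A wtc dualc .c (.L n) (by simp [wtc])]
      simp [A.bracket_cX]
    case c.M =>
      rw [cForm_basis_zero A wtc dualc .c (.M n) (by simp [wtc])]
      simp [A.bracket_cX]
    case c.Y =>
      rw [cForm_basis_zero A wtc dualc .c (.Y n) (by simp [wtc])]
      simp [A.bracket_cX]
    case c.c =>
      rw [cForm_basis_zero A wtc dualc .c .c (by simp [wtc])]
      simp [A.bracket_c]
  have := LinearMap.congr_fun (LinearMap.congr_fun key x) y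
  simpa using this

/-- L k coefficient of a bracket equals the convolution form -/
lemma coord_bracket_L (A : SVAlgebra sv) (k : ℤ) (x y : sv) :
    A.basis.repr ⁅x, y⁆ (SVIndex.L k) = cForm A (wtL k) (dualL k) x y := by
  classical
  have key : (br : sv →ₗ[ℂ] sv →ₗ[ℂ] sv).compr₂ (A.basis.coord (SVIndex.L k))
      = cForm A (wtL k) (dualL k) := by
    refine A.basis.ext fun i => A.basis.ext fun j => ?_
    simp only [LinearMap.compr₂_apply, br_apply, Module.Basis.coord_apply]
    rcases i with m | m | m | _ <;> rcases j with n | n | n | _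
    case L.L =>
      by_cases h : n = k - m
      · rw [cForm_basis_eq A (wtL k) (dualL k) (.L m) (.L n) (by simp [dualL, h])]
        subst h
        have hmk : m + (k - m) = k := by ring
        by_cases hk : k = 0
        · subst hk
          simp [A.bracket_LL, Finsupp.single_apply, wtL, hmk]
          push_cast
          ring
        · have : ¬ (m + (k - m) = 0) := by omega
          simp [A.bracket_LL, Finsupp.single_apply, wtL, hmk, this, hk]
          push_cast
          ring
      · rw [cForm_basis_ne A (wtL k) (dualL k) (.L m) (.L n)
          (by simp only [dualL, ne_eq, SVIndex.L.injEq]; omega)]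
        have hmn : ¬ (m + n = k) := by omega
        simp only [basis_L, A.bracket_LL, map_add, map_smul, Finsupp.smul_apply, smul_eq_mul]
        rw [repr_L]
        split_ifs with h2
        · simp [Finsupp.single_apply, hmn]
        · simp [Finsupp.single_apply, hmn]
    case L.M =>
      rw [cForm_basis_ne A (wtL k) (dualL k) (.L m) (.M n) (by simp [dualL])]
      simp [A.bracket_LM, Finsupp.single_apply]
    case L.Y =>
      rw [cForm_basis_ne A (wtL k) (dualL k) (.L m) (.Y n) (by simp [dualL])]
      simp [A.bracket_LY, Finsupp.single_apply]
    case L.c =>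
      rw [cForm_basis_ne A (wtL k) (dualL k) (.L m) .c (by simp [dualL])]
      simp [A.bracket_c]
    case M.L =>
      rw [cForm_basis_zero A (wtL k) (dualL k) (.M m) (.L n) (by simp [wtL])]
      simp [A.bracket_ML_s5, Finsupp.single_apply]
    case M.M =>
      rw [cForm_basis_zero A (wtL k) (dualL k) (.M m) (.M n) (by simp [wtL])]
      simp [A.bracket_MM]
    case M.Y =>
      rw [cForm_basis_zero A (wtL k) (dualL k) (.M m) (.Y n) (by simp [wtL])]
      simp [A.bracket_MY]
    case M.c =>
      rw [cForm_basis_zero A (wtL k) (dualL k) (.M m) .c (by simp [wtL])]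
      simp [A.bracket_c]
    case Y.L =>
      rw [cForm_basis_zero A (wtL k) (dualL k) (.Y m) (.L n) (by simp [wtL])]
      simp [A.bracket_YL_s5, Finsupp.single_apply]
    case Y.M =>
      rw [cForm_basis_zero A (wtL k) (dualL k) (.Y m) (.M n) (by simp [wtL])]
      simp [A.bracket_YM_s5]
    case Y.Y =>
      rw [cForm_basis_zero A (wtL k) (dualL k) (.Y m) (.Y n) (by simp [wtL])]
      simp [A.bracket_YY, Finsupp.single_apply]
    case Y.c =>
      rw [cForm_basis_zero A (wtL k) (dualL k) (.Y m) .c (by simp [wtL])]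
      simp [A.bracket_c]
    case c.L =>
      rw [cForm_basis_zero A (wtL k) (dualL k) .c (.L n) (by simp [wtL])]
      simp [A.bracket_cX]
    case c.M =>
      rw [cForm_basis_zero A (wtL k) (dualL k) .c (.M n) (by simp [wtL])]
      simp [A.bracket_cX]
    case c.Y =>
      rw [cForm_basis_zero A (wtL k) (dualL k) .c (.Y n) (by simp [wtL])]
      simp [A.bracket_cX]
    case c.c =>
      rw [cForm_basis_zero A (wtL k) (dualL k) .c .c (by simp [wtL])]
      simp [A.bracket_c]
  have := LinearMap.congr_fun (LinearMap.congr_fun key x) y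
  simpa using this

noncomputable def ev : SVIndex → ℂ := fun i => match i with
  | .L n => (n : ℂ)
  | .M n => (n : ℂ)
  | .Y n => (n : ℂ) + 1/2
  | .c => 0

lemma coord_adL0 (A : SVAlgebra sv) (z : sv) (i : SVIndex) :
    A.basis.repr ⁅A.L 0, z⁆ i = ev i * A.basis.repr z i := by
  classical
  have key : (A.basis.coord i).comp (br (A.L 0)) = ev i • A.basis.coord i := by
    refine A.basis.ext fun j => ?_
    simp only [LinearMap.comp_apply, br_apply, Module.Basis.coord_apply, LinearMap.smul_apply,
      smul_eq_mul]
    rcases j with n | n | n | _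
    · simp [A.bracket_LL, Finsupp.single_apply]
      split_ifs with h
      · subst h; simp [ev]
      · ring
    · simp [A.bracket_LM, Finsupp.single_apply]
      split_ifs with h
      · subst h; simp [ev]
      · ring
    · simp [A.bracket_LY, Finsupp.single_apply]
      split_ifs with h
      · subst h; simp [ev]; try ring
      · ring
    · simp [A.bracket_c, Finsupp.single_apply]
      intro h
      subst h; simp [ev]
  have := LinearMap.congr_fun key z
  simpa using this

lemma coord_adL1 (A : SVAlgebra sv) (z : sv) :
    A.basis.repr ⁅A.L 1, z⁆ (SVIndex.L 1) = - A.basis.repr z (SVIndex.L 0) := by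
  classical
  have key : (A.basis.coord (SVIndex.L 1)).comp (br (A.L 1))
      = - A.basis.coord (SVIndex.L 0) := by
    refine A.basis.ext fun j => ?_
    simp only [LinearMap.comp_apply, br_apply, Module.Basis.coord_apply, LinearMap.neg_apply]
    rcases j with n | n | n | _
    · simp [A.bracket_LL, Finsupp.single_apply]
    · simp [A.bracket_LM, Finsupp.single_apply]
    · simp [A.bracket_LY, Finsupp.single_apply]
    · simp [A.bracket_c]
  have := LinearMap.congr_fun key z
  simpa using this

lemma M0_central (A : SVAlgebra sv) (x : sv) : ⁅x, A.M 0⁆ = 0 := by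
  have key : (br : sv →ₗ[ℂ] sv →ₗ[ℂ] sv).flip (A.M 0) = 0 := by
    refine A.basis.ext fun j => ?_
    simp only [LinearMap.flip_apply, br_apply, LinearMap.zero_apply]
    rcases j with n | n | n | _
    · simp [A.bracket_LM]
    · simp [A.bracket_MM]
    · simp [A.bracket_YM_s5]
    · simp [A.bracket_cX]
  have := LinearMap.congr_fun key x
  simpa using this

lemma Y_half_ne (n : ℤ) : (n : ℂ) + 1/2 ≠ 0 := by
  intro h
  have h2 : ((2*n + 1 : ℤ) : ℂ) = 0 := by push_cast; linear_combination 2 * h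
  have h3 : (2*n + 1 : ℤ) = 0 := by exact_mod_cast h2
  omega

lemma central_char (A : SVAlgebra sv) (z : sv) (hz : ∀ x : sv, ⁅x, z⁆ = 0) :
    z = A.basis.repr z SVIndex.c • A.c + A.basis.repr z (SVIndex.M 0) • A.M 0 := by
  classical
  have h0 : ∀ i, ev i * A.basis.repr z i = 0 := by
    intro i
    have := coord_adL0 A z i
    rw [hz (A.L 0)] at this
    simpa using this.symm
  have hL0 : A.basis.repr z (SVIndex.L 0) = 0 := by
    have := coord_adL1 A z
    rw [hz (A.L 1)] at this
    simpa using this.symm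
  refine A.basis.ext_elem fun i => ?_
  have hrhs : A.basis.repr (A.basis.repr z SVIndex.c • A.c
      + A.basis.repr z (SVIndex.M 0) • A.M 0) i
      = A.basis.repr z SVIndex.c * (Finsupp.single SVIndex.c 1 i)
        + A.basis.repr z (SVIndex.M 0) * (Finsupp.single (SVIndex.M 0) 1 i) := by
    simp [Finsupp.single_apply]
  rw [hrhs]
  rcases i with n | n | n | _
  · by_cases h : n = 0
    · subst h; simp [Finsupp.single_apply, hL0]
    · have := h0 (SVIndex.L n)
      have hne : (n:ℂ) ≠ 0 := Int.cast_ne_zero.mpr h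
      simp only [ev] at this
      rcases mul_eq_zero.mp this with h' | h'
      · exact absurd h' hne
      · simp [Finsupp.single_apply, h']
  · by_cases h : n = 0
    · subst h; simp [Finsupp.single_apply]
    · have := h0 (SVIndex.M n)
      have hne : (n:ℂ) ≠ 0 := Int.cast_ne_zero.mpr h
      simp only [ev] at this
      rcases mul_eq_zero.mp this with h' | h'
      · exact absurd h' hne
      · rw [h']; simp [Finsupp.single_apply, Ne.symm h]
  · have := h0 (SVIndex.Y n)
    simp only [ev] at this
    rcases mul_eq_zero.mp this with h' | h'
    · exact absurd h' (Y_half_ne n)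
    · simp [Finsupp.single_apply, h']
  · simp [Finsupp.single_apply]

def invL : SVIndex → ℤ := fun i => match i with
  | .L m => m
  | _ => 0

lemma cForm_sum (A : SVAlgebra sv) (w : SVIndex → ℂ) (d : SVIndex → SVIndex)
    (hwM : ∀ n, w (.M n) = 0) (hwY : ∀ n, w (.Y n) = 0) (hwc : w .c = 0) (v u : sv) :
    cForm A w d v u = ∑ m ∈ ((A.basis.repr v).support.image invL),
      w (.L m) * (A.basis.repr v (.L m)) * (A.basis.repr u (d (.L m))) := by
  classical
  set g := A.basis.repr v with hg
  set S := g.support.image invL with hS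
  set T := S.image SVIndex.L with hT
  set F : SVIndex → ℂ → ℂ := fun i a => w i * a * (A.basis.repr u (d i)) with hF
  have step1 : cForm A w d v u = ∑ i ∈ g.support ∪ T, F i (g i) := by
    rw [cForm_apply]
    exact Finset.sum_subset Finset.subset_union_left
      (fun i _ hi => by
        have : g i = 0 := Finsupp.notMem_support_iff.mp hi
        simp [hF, ← hg, this])
  have step2 : ∑ i ∈ g.support ∪ T, F i (g i) = ∑ i ∈ T, F i (g i) := by
    refine (Finset.sum_subset Finset.subset_union_right ?_).symm
    intro i hi hiT
    rcases Finset.mem_union.mp hi with h | h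
    swap
    · exact absurd h hiT
    rcases i with m | m | m | _
    · exfalso
      apply hiT
      rw [hT]
      refine Finset.mem_image.mpr ⟨m, ?_, rfl⟩
      rw [hS]
      exact Finset.mem_image.mpr ⟨.L m, h, rfl⟩
    · simp [hF, hwM]
    · simp [hF, hwY]
    · simp [hF, hwc]
  have step3 : ∑ i ∈ T, F i (g i) = ∑ m ∈ S, F (.L m) (g (.L m)) := by
    rw [hT]
    exact Finset.sum_image (fun x _ y _ h => by injection h)
  rw [step1, step2, step3]


end SVAlgebra

open SVAlgebra

/-- For any conjugate-linear anti-involution `θ` of `𝔰𝔳` there are `λ, μ` of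
modulus one and `λ' ∈ ℂ` with `θ(c) = λ·c + λ'·M₀` and `θ(M₀) = μ·M₀`. -/
theorem sv_antiInvolution_on_center (A : SVAlgebra sv) (θ : ConjAntiInvolution sv) :
    ∃ lam mu lam' : ℂ, ‖lam‖ = 1 ∧ ‖mu‖ = 1 ∧
      θ.toFun A.c = lam • A.c + lam' • A.M 0 ∧
      θ.toFun (A.M 0) = mu • A.M 0 := by
  classical
  have theta_zero : θ.toFun 0 = 0 := by
    have := θ.map_smul' 0 0
    simpa using this
  -- θ maps central elements to central elements
  have theta_central : ∀ w : sv, (∀ x : sv, ⁅x, w⁆ = 0) → ∀ x : sv, ⁅x, θ.toFun w⁆ = 0 := by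
    intro w hw x
    have hx : x = θ.toFun (θ.toFun x) := (θ.invol' x).symm
    rw [hx, ← θ.map_bracket']
    have hzero : ⁅w, θ.toFun x⁆ = 0 := by
      rw [← lie_skew, hw (θ.toFun x)]; simp
    rw [hzero, theta_zero]
  have hc_central : ∀ x : sv, ⁅x, θ.toFun A.c⁆ = 0 := theta_central A.c A.bracket_c
  have hM_central : ∀ x : sv, ⁅x, θ.toFun (A.M 0)⁆ = 0 :=
    theta_central (A.M 0) (A.M0_central)
  set lam := A.basis.repr (θ.toFun A.c) SVIndex.c with hlam
  set lam' := A.basis.repr (θ.toFun A.c) (SVIndex.M 0) with hlam'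
  set kappa := A.basis.repr (θ.toFun (A.M 0)) SVIndex.c with hkappa
  set mu := A.basis.repr (θ.toFun (A.M 0)) (SVIndex.M 0) with hmu
  have hθc : θ.toFun A.c = lam • A.c + lam' • A.M 0 := central_char A _ hc_central
  have hθM : θ.toFun (A.M 0) = kappa • A.c + mu • A.M 0 := central_char A _ hM_central
  -- M 0 is a bracket of Y's
  have hM0br : A.M 0 = ⁅A.Y (-1), A.Y 0⁆ := by
    rw [A.bracket_YY]; norm_num
  set u := θ.toFun (A.Y (-1)) with hu
  set v := θ.toFun (A.Y 0) with hv
  have hθMbr : θ.toFun (A.M 0) = ⁅v, u⁆ := by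
    rw [hM0br, θ.map_bracket']
  -- the coefficient of c in θ(M 0) vanishes
  have hLcoeff : ∀ k : ℤ, A.basis.repr ⁅v, u⁆ (SVIndex.L k) = 0 := by
    intro k
    rw [← hθMbr, hθM]
    simp [Finsupp.single_apply]
  set a : ℤ → ℂ := fun m => A.basis.repr v (.L m) with ha_def
  set b : ℤ → ℂ := fun n => A.basis.repr u (.L n) with hb_def
  set S := (A.basis.repr v).support.image invL with hS
  set T := (A.basis.repr u).support.image invL with hT
  have ha : ∀ m ∉ S, a m = 0 := by
    intro m hm
    rw [ha_def]
    by_contra h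
    exact hm (Finset.mem_image.mpr ⟨.L m, Finsupp.mem_support_iff.mpr h, rfl⟩)
  have hb : ∀ n ∉ T, b n = 0 := by
    intro n hn
    rw [hb_def]
    by_contra h
    exact hn (Finset.mem_image.mpr ⟨.L n, Finsupp.mem_support_iff.mpr h, rfl⟩)
  have hconv : ∀ k : ℤ, ∑ m ∈ S, ((k:ℂ) - 2*(m:ℂ)) * a m * b (k - m) = 0 := by
    intro k
    have h1 := coord_bracket_L A k v u
    rw [hLcoeff k] at h1
    have h2 := cForm_sum A (wtL k) (dualL k) (fun n => rfl) (fun n => rfl) rfl v u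
    calc ∑ m ∈ S, ((k:ℂ) - 2*(m:ℂ)) * a m * b (k - m)
        = ∑ m ∈ S, wtL k (SVIndex.L m) * (A.basis.repr v (SVIndex.L m))
            * (A.basis.repr u (dualL k (SVIndex.L m))) := by
          refine Finset.sum_congr rfl fun m _ => rfl
      _ = cForm A (wtL k) (dualL k) v u := h2.symm
      _ = 0 := by rw [← h1]
  have hkey : ∑ m ∈ S, (((m:ℂ)^3 - (m:ℂ))/12) * a m * b (-m) = 0 :=
    comb_main a b S T ha hb hconv
  have hkappa0 : kappa = 0 := by
    have h1 := coord_bracket_c A v u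
    have h2 := cForm_sum A wtc dualc (fun n => rfl) (fun n => rfl) rfl v u
    rw [hkappa, hθMbr, h1, h2, ← hkey]
    refine Finset.sum_congr rfl fun m _ => rfl
  have hθM2 : θ.toFun (A.M 0) = mu • A.M 0 := by rw [hθM, hkappa0]; simp
  -- modulus of mu
  have hmu1 : (starRingEnd ℂ) mu * mu = 1 := by
    have e1 : θ.toFun (θ.toFun (A.M 0)) = A.M 0 := θ.invol' (A.M 0)
    rw [hθM2, θ.map_smul', hθM2, smul_smul] at e1
    have h2 := congrArg (fun x => A.basis.repr x (SVIndex.M 0)) e1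
    simpa [Finsupp.single_apply] using h2
  have hlam1 : (starRingEnd ℂ) lam * lam = 1 := by
    have e1 : θ.toFun (θ.toFun A.c) = A.c := θ.invol' A.c
    rw [hθc, θ.map_add', θ.map_smul', θ.map_smul', hθc, hθM2] at e1
    have h2 := congrArg (fun x => A.basis.repr x SVIndex.c) e1
    simp only [map_add, map_smul, Finsupp.add_apply, Finsupp.smul_apply, smul_eq_mul,
      repr_c, repr_M, Finsupp.single_apply] at h2
    norm_num at h2
    rw [if_neg (fun h => SVIndex.noConfusion h), if_neg (fun h => SVIndex.noConfusion h)] at h2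
    linear_combination h2
  have habs : ∀ t : ℂ, (starRingEnd ℂ) t * t = 1 → ‖t‖ = 1 := by
    intro t ht
    have h1 : ((Complex.normSq t : ℝ) : ℂ) = 1 := by
      rw [← Complex.mul_conj, mul_comm]; exact ht
    have h2 : Complex.normSq t = 1 := by exact_mod_cast h1
    rw [Complex.norm_def, h2, Real.sqrt_one]
  exact ⟨lam, mu, lam', habs lam hlam1, habs mu hmu1, hθc, hθM2⟩
end

section
/- Let α ∈ ℝ∖{0}, β ∈ ℂ, μ ∈ ℂ with |μ| = 1, and set L'_n := L_n − ((n−1)/2)·α⁻¹·β·M_n ∈ 𝔰𝔳 for n ∈ ℤ. Then the elements {L'_n, c} satisfy the Virasoro relations [L'_m, L'_n] = (n−m)·L'_{m+n} + δ_{m+n,0}·((m³−m)/12)·c for all m, n ∈ ℤ; moreover, for the anti-involution θ⁺_{α,β,μ} one has θ⁺_{α,β,μ}(L'_n) = αⁿ·L'_{−n} and θ⁺_{α,β,μ}(c) = c for all n ∈ ℤ. -/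
variable {sv : Type*} [LieRing sv] [LieAlgebra ℂ sv]

/-- The elements `L'_n = L_n − ((n−1)/2)·α⁻¹·β·M_n` together with `c` satisfy the
Virasoro relations, and `θ⁺_{α,β,μ}` restricts to `L'_n ↦ αⁿ·L'_{−n}`, `c ↦ c`. -/
theorem sv_virasoro_copy_thetaPlus (A : SVAlgebra sv) (α : ℝ) (hα : α ≠ 0)
    (β μ s t : ℂ) (hμ : ‖μ‖ = 1) (hs : s ^ 2 = μ) (ht : t ^ 2 = (α : ℂ))
    (θ : ConjAntiInvolution sv)
    (hL : ∀ n : ℤ, θ.toFun (A.L n) = ((α : ℂ) ^ n) • A.L (-n) +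
        ((((n : ℂ) + 1) / 2) * (α : ℂ) ^ (n - 1) * β +
          (((n : ℂ) - 1) / 2) * (α : ℂ) ^ (n - 1) * μ * starRingEnd ℂ β) • A.M (-n))
    (hc : θ.toFun A.c = A.c)
    (hM : ∀ n : ℤ, θ.toFun (A.M n) = (μ * (α : ℂ) ^ n) • A.M (-n))
    (hY : ∀ n : ℤ, θ.toFun (A.Y n) = (s * t ^ (2 * n + 1)) • A.Y (-n - 1))
    (L' : ℤ → sv)
    (hL' : ∀ n : ℤ, L' n = A.L n - ((((n : ℂ) - 1) / 2) * (α : ℂ)⁻¹ * β) • A.M n) :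
    (∀ m n : ℤ, ⁅L' m, L' n⁆ = ((n : ℂ) - (m : ℂ)) • L' (m + n)
        + (if m + n = 0 then ((m : ℂ) ^ 3 - (m : ℂ)) / 12 else 0) • A.c) ∧
    (∀ n : ℤ, θ.toFun (L' n) = ((α : ℂ) ^ n) • L' (-n)) ∧
    θ.toFun A.c = A.c := by
  have hαC : (α : ℂ) ≠ 0 := Complex.ofReal_ne_zero.mpr hα
  have hsub : ∀ x y : sv, θ.toFun (x - y) = θ.toFun x - θ.toFun y := by
    intro x y
    rw [sub_eq_add_neg, ← neg_one_smul ℂ y, θ.map_add', θ.map_smul']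
    simp [sub_eq_add_neg]
  refine ⟨?_, ?_, hc⟩
  · intro m n
    have hML : ∀ p q : ℤ, ⁅A.M p, A.L q⁆ = (-(p : ℂ)) • A.M (p + q) := by
      intro p q
      rw [← lie_skew, A.bracket_LM, add_comm q p, neg_smul]
    rw [hL' m, hL' n, hL' (m + n)]
    rw [sub_lie, lie_sub, lie_sub, lie_smul, lie_smul, smul_lie, smul_lie,
      A.bracket_LL, A.bracket_LM, hML, A.bracket_MM]
    push_cast
    match_scalars <;> ring
  · intro n
    rw [hL' n, hL' (-n), hsub, θ.map_smul', hL, hM]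
    have hconj : (starRingEnd ℂ) ((((n : ℂ) - 1) / 2) * (α : ℂ)⁻¹ * β)
        = (((n : ℂ) - 1) / 2) * (α : ℂ)⁻¹ * (starRingEnd ℂ β) := by
      simp [map_mul, map_div₀, map_sub, map_inv₀, Complex.conj_ofReal, map_ofNat]
    rw [hconj]
    have hz : (α : ℂ) ^ (n - 1) = (α : ℂ) ^ n * (α : ℂ)⁻¹ := zpow_sub_one₀ hαC n
    rw [hz]
    push_cast
    match_scalars <;> field_simp <;> ring
end

section
/- Let θ be a conjugate-linear anti-involution of the Schrödinger–Virasoro Lie algebra 𝔰𝔳 and α ∈ ℝ∖{0} such that θ(L_n) − αⁿ·L_{−n} ∈ M ⊕ Y for all n ∈ ℤ, where M = span_ℂ{M_n : n ∈ ℤ} and Y = span_ℂ{Y_{n+1/2} : n ∈ ℤ}. Then θ(c) = c, and there exists μ ∈ ℂ with |μ| = 1 such that θ(M_n) = μ·αⁿ·M_{−n} for all n ∈ ℤ. -/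
namespace SVAux

noncomputable instance : DecidableEq SVIndex := Classical.decEq _

variable {sv : Type*} [LieRing sv] [LieAlgebra ℂ sv] (A : SVAlgebra sv)

/-- the basis function -/
def bf : SVIndex → sv := fun i => match i with
  | .L n => A.L n | .M n => A.M n | .Y n => A.Y n | .c => A.c

lemma indep' : LinearIndependent ℂ (bf A) := A.indep
lemma span' : Submodule.span ℂ (Set.range (bf A)) = ⊤ := A.span_top

noncomputable def B : Module.Basis SVIndex ℂ sv := Module.Basis.mk (indep' A) (le_of_eq (span' A).symm)

@[simp] lemma B_apply (i : SVIndex) : B A i = bf A i := Module.Basis.mk_apply _ _ i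
@[simp] lemma bf_L (n : ℤ) : bf A (.L n) = A.L n := rfl
@[simp] lemma bf_M (n : ℤ) : bf A (.M n) = A.M n := rfl
@[simp] lemma bf_Y (n : ℤ) : bf A (.Y n) = A.Y n := rfl
@[simp] lemma bf_c : bf A .c = A.c := rfl

lemma repr_bf (i j : SVIndex) : (B A).repr (bf A i) j = if i = j then 1 else 0 := by
  rw [← B_apply, Module.Basis.repr_self, Finsupp.single_apply]

@[simp] lemma repr_L (n : ℤ) (j : SVIndex) :
    (B A).repr (A.L n) j = if SVIndex.L n = j then 1 else 0 := repr_bf A (.L n) j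
@[simp] lemma repr_M (n : ℤ) (j : SVIndex) :
    (B A).repr (A.M n) j = if SVIndex.M n = j then 1 else 0 := repr_bf A (.M n) j
@[simp] lemma repr_Y (n : ℤ) (j : SVIndex) :
    (B A).repr (A.Y n) j = if SVIndex.Y n = j then 1 else 0 := repr_bf A (.Y n) j
@[simp] lemma repr_c (j : SVIndex) :
    (B A).repr A.c j = if SVIndex.c = j then 1 else 0 := repr_bf A .c j

/-- The span of the M's. -/
def Mo : Submodule ℂ sv := Submodule.span ℂ (Set.range A.M)
/-- The span of the Y's. -/
def Yo : Submodule ℂ sv := Submodule.span ℂ (Set.range A.Y)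
/-- The span of M's and Y's. -/
def MY : Submodule ℂ sv := Submodule.span ℂ (Set.range A.M ∪ Set.range A.Y)

lemma Mo_le_MY : Mo A ≤ MY A := Submodule.span_mono Set.subset_union_left
lemma Yo_le_MY : Yo A ≤ MY A := Submodule.span_mono Set.subset_union_right

lemma M_mem_Mo (n : ℤ) : A.M n ∈ Mo A := Submodule.subset_span ⟨n, rfl⟩
lemma Y_mem_Yo (n : ℤ) : A.Y n ∈ Yo A := Submodule.subset_span ⟨n, rfl⟩
lemma M_mem_MY (n : ℤ) : A.M n ∈ MY A := Mo_le_MY A (M_mem_Mo A n)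
lemma Y_mem_MY (n : ℤ) : A.Y n ∈ MY A := Yo_le_MY A (Y_mem_Yo A n)

/-- coordinates on L and c vanish for elements of MY -/
lemma coL_MY {x : sv} (hx : x ∈ MY A) (j : ℤ) : (B A).repr x (.L j) = 0 := by
  induction hx using Submodule.span_induction with
  | mem a ha => rcases ha with ⟨n, rfl⟩ | ⟨n, rfl⟩ <;> simp
  | zero => simp
  | add a b _ _ h1 h2 => simp [h1, h2]
  | smul c a _ h => simp [h]

lemma coc_MY {x : sv} (hx : x ∈ MY A) : (B A).repr x .c = 0 := by
  induction hx using Submodule.span_induction with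
  | mem a ha => rcases ha with ⟨n, rfl⟩ | ⟨n, rfl⟩ <;> simp
  | zero => simp
  | add a b _ _ h1 h2 => simp [h1, h2]
  | smul c a _ h => simp [h]

lemma coY_Mo {x : sv} (hx : x ∈ Mo A) (j : ℤ) : (B A).repr x (.Y j) = 0 := by
  induction hx using Submodule.span_induction with
  | mem a ha => rcases ha with ⟨n, rfl⟩; simp
  | zero => simp
  | add a b _ _ h1 h2 => simp [h1, h2]
  | smul c a _ h => simp [h]

lemma coM_Yo {x : sv} (hx : x ∈ Yo A) (j : ℤ) : (B A).repr x (.M j) = 0 := by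
  induction hx using Submodule.span_induction with
  | mem a ha => rcases ha with ⟨n, rfl⟩; simp
  | zero => simp
  | add a b _ _ h1 h2 => simp [h1, h2]
  | smul c a _ h => simp [h]

/-- if all coordinates vanish, the element is zero -/
lemma eq_zero_of_coords {x : sv} (h : ∀ i, (B A).repr x i = 0) : x = 0 := by
  have : (B A).repr x = (B A).repr 0 := by
    ext i; simp [h i]
  exact (B A).repr.injective this

/-- membership from coordinates: in MY -/
lemma mem_MY_of_coords {x : sv} (hL : ∀ j, (B A).repr x (.L j) = 0)
    (hc : (B A).repr x .c = 0) : x ∈ MY A := by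
  have hx : x = ((B A).repr x).sum fun i a => a • B A i :=
    ((B A).linearCombination_repr x).symm.trans (Finsupp.linearCombination_apply _ _)
  rw [hx]
  apply Submodule.sum_mem
  intro i hi
  apply Submodule.smul_mem
  match i with
  | .L j => exact absurd (hL j) (Finsupp.mem_support_iff.mp hi)
  | .c => exact absurd hc (Finsupp.mem_support_iff.mp hi)
  | .M j => simpa using M_mem_MY A j
  | .Y j => simpa using Y_mem_MY A j

lemma mem_Mo_of_coords {x : sv} (hL : ∀ j, (B A).repr x (.L j) = 0)
    (hY : ∀ j, (B A).repr x (.Y j) = 0)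
    (hc : (B A).repr x .c = 0) : x ∈ Mo A := by
  have hx : x = ((B A).repr x).sum fun i a => a • B A i :=
    ((B A).linearCombination_repr x).symm.trans (Finsupp.linearCombination_apply _ _)
  rw [hx]
  apply Submodule.sum_mem
  intro i hi
  apply Submodule.smul_mem
  match i with
  | .L j => exact absurd (hL j) (Finsupp.mem_support_iff.mp hi)
  | .c => exact absurd hc (Finsupp.mem_support_iff.mp hi)
  | .Y j => exact absurd (hY j) (Finsupp.mem_support_iff.mp hi)
  | .M j => simpa using M_mem_Mo A j



/-- MY is an ideal: brackets with anything land in MY -/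
lemma lie_mem_MY {x : sv} (hx : x ∈ MY A) (z : sv) : ⁅z, x⁆ ∈ MY A := by
  induction hx using Submodule.span_induction with
  | mem a ha =>
    have hz : z ∈ Submodule.span ℂ (Set.range (bf A)) := by rw [span' A]; trivial
    induction hz using Submodule.span_induction with
    | mem b hb =>
      obtain ⟨i, rfl⟩ := hb
      rcases ha with ⟨n, rfl⟩ | ⟨n, rfl⟩ <;> match i with
      | .L m => first
        | (rw [bf_L, A.bracket_LM]; exact Submodule.smul_mem _ _ (M_mem_MY A _))
        | (rw [bf_L, A.bracket_LY]; exact Submodule.smul_mem _ _ (Y_mem_MY A _))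
      | .M m => first
        | (rw [bf_M, A.bracket_MM]; exact Submodule.zero_mem _)
        | (rw [bf_M, A.bracket_MY]; exact Submodule.zero_mem _)
      | .Y m => first
        | (rw [bf_Y, ← lie_skew, A.bracket_MY, neg_zero]; exact Submodule.zero_mem _)
        | (rw [bf_Y, A.bracket_YY]; exact Submodule.smul_mem _ _ (M_mem_MY A _))
      | .c => first
        | (rw [bf_c, ← lie_skew, A.bracket_c, neg_zero]; exact Submodule.zero_mem _)
        | (rw [bf_c, ← lie_skew, A.bracket_c, neg_zero]; exact Submodule.zero_mem _)
    | zero => rw [zero_lie]; exact Submodule.zero_mem _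
    | add a b _ _ h1 h2 => rw [add_lie]; exact Submodule.add_mem _ h1 h2
    | smul c a _ h => rw [smul_lie]; exact Submodule.smul_mem _ _ h
  | zero => rw [lie_zero]; exact Submodule.zero_mem _
  | add a b _ _ h1 h2 => rw [lie_add]; exact Submodule.add_mem _ h1 h2
  | smul c a _ h => rw [lie_smul]; exact Submodule.smul_mem _ _ h

lemma lie_mem_MY' {x : sv} (hx : x ∈ MY A) (z : sv) : ⁅x, z⁆ ∈ MY A := by
  rw [← lie_skew]
  exact Submodule.neg_mem _ (lie_mem_MY A hx z)

/-- brackets of MY elements land in Mo -/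
lemma lie_MY_MY {x y : sv} (hx : x ∈ MY A) (hy : y ∈ MY A) : ⁅x, y⁆ ∈ Mo A := by
  induction hx, hy using Submodule.span_induction₂ with
  | mem_mem a b ha hb =>
    rcases ha with ⟨n, rfl⟩ | ⟨n, rfl⟩ <;> rcases hb with ⟨m, rfl⟩ | ⟨m, rfl⟩
    · rw [A.bracket_MM]; exact Submodule.zero_mem _
    · rw [A.bracket_MY]; exact Submodule.zero_mem _
    · rw [← lie_skew, A.bracket_MY, neg_zero]
      exact Submodule.zero_mem _
    · rw [A.bracket_YY]; exact Submodule.smul_mem _ _ (M_mem_Mo A _)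
  | zero_left y hy => rw [zero_lie]; exact Submodule.zero_mem _
  | zero_right x hx => rw [lie_zero]; exact Submodule.zero_mem _
  | add_left x y z _ _ _ h1 h2 => rw [add_lie]; exact Submodule.add_mem _ h1 h2
  | add_right x y z _ _ _ h1 h2 => rw [lie_add]; exact Submodule.add_mem _ h1 h2
  | smul_left r x y _ _ h => rw [smul_lie]; exact Submodule.smul_mem _ _ h
  | smul_right r x y _ _ h => rw [lie_smul]; exact Submodule.smul_mem _ _ h

/-- Mo elements commute with MY elements -/
lemma lie_Mo_MY {x y : sv} (hx : x ∈ Mo A) (hy : y ∈ MY A) : ⁅x, y⁆ = 0 := by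
  induction hx using Submodule.span_induction with
  | mem a ha =>
    obtain ⟨n, rfl⟩ := ha
    induction hy using Submodule.span_induction with
    | mem b hb =>
      rcases hb with ⟨m, rfl⟩ | ⟨m, rfl⟩
      · exact A.bracket_MM n m
      · exact A.bracket_MY n m
    | zero => exact lie_zero _
    | add a b _ _ h1 h2 => rw [lie_add, h1, h2, add_zero]
    | smul c a _ h => rw [lie_smul, h, smul_zero]
  | zero => exact zero_lie _
  | add a b _ _ h1 h2 => rw [add_lie, h1, h2, add_zero]
  | smul c a _ h => rw [smul_lie, h, smul_zero]

lemma lie_MY_Mo {x y : sv} (hx : x ∈ MY A) (hy : y ∈ Mo A) : ⁅x, y⁆ = 0 := by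
  rw [← lie_skew, lie_Mo_MY A hy hx, neg_zero]

/-- M-coordinates of ⁅L r, x⁆ for x ∈ MY -/
lemma coM_lie_L {x : sv} (hx : x ∈ MY A) (r k : ℤ) :
    (B A).repr ⁅A.L r, x⁆ (.M k) = ((k : ℂ) - r) * (B A).repr x (.M (k - r)) := by
  induction hx using Submodule.span_induction with
  | mem a ha =>
    rcases ha with ⟨n, rfl⟩ | ⟨n, rfl⟩
    · rw [A.bracket_LM]
      simp only [map_smul, repr_M, Finsupp.smul_apply, smul_eq_mul, SVIndex.M.injEq]
      by_cases h : r + n = k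
      · rw [if_pos h, if_pos (by omega)]
        subst h; push_cast; ring
      · rw [if_neg h, if_neg (by omega), mul_zero, mul_zero]
    · rw [A.bracket_LY]
      simp
  | zero => simp
  | add a b _ _ h1 h2 => simp only [lie_add, map_add, Finsupp.add_apply, h1, h2]; ring
  | smul c a _ h => simp only [lie_smul, map_smul, Finsupp.smul_apply, smul_eq_mul, h]; ring

/-- Y-coordinates of ⁅L r, x⁆ for x ∈ MY -/
lemma coY_lie_L {x : sv} (hx : x ∈ MY A) (r k : ℤ) :
    (B A).repr ⁅A.L r, x⁆ (.Y k) =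
      ((k : ℂ) - r + (1 - r) / 2) * (B A).repr x (.Y (k - r)) := by
  induction hx using Submodule.span_induction with
  | mem a ha =>
    rcases ha with ⟨n, rfl⟩ | ⟨n, rfl⟩
    · rw [A.bracket_LM]
      simp
    · rw [A.bracket_LY]
      simp only [map_smul, repr_Y, Finsupp.smul_apply, smul_eq_mul, SVIndex.Y.injEq]
      by_cases h : r + n = k
      · rw [if_pos h, if_pos (by omega)]
        subst h; push_cast; ring
      · rw [if_neg h, if_neg (by omega), mul_zero, mul_zero]
  | zero => simp
  | add a b _ _ h1 h2 => simp only [lie_add, map_add, Finsupp.add_apply, h1, h2]; ring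
  | smul c a _ h => simp only [lie_smul, map_smul, Finsupp.smul_apply, smul_eq_mul, h]; ring

/-- L-coordinates of ⁅L 0, x⁆ for arbitrary x -/
lemma coL_lie_L0 (x : sv) (j : ℤ) :
    (B A).repr ⁅A.L 0, x⁆ (.L j) = (j : ℂ) * (B A).repr x (.L j) := by
  have hx : x ∈ Submodule.span ℂ (Set.range (bf A)) := by rw [span' A]; trivial
  induction hx using Submodule.span_induction with
  | mem a ha =>
    obtain ⟨i, rfl⟩ := ha
    match i with
    | .L n =>
      rw [bf_L, A.bracket_LL]
      have h0 : (if (0:ℤ) + n = 0 then (((0:ℤ):ℂ) ^ 3 - ((0:ℤ):ℂ)) / 12 else 0) = 0 := by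
        split <;> norm_num
      rw [h0, zero_smul, add_zero]
      simp only [map_smul, repr_L, Finsupp.smul_apply, smul_eq_mul, SVIndex.L.injEq, zero_add]
      by_cases h : n = j
      · subst h; simp
      · simp only [if_neg h]; ring
    | .M n => rw [bf_M, A.bracket_LM]; simp
    | .Y n => rw [bf_Y, A.bracket_LY]; simp
    | .c => rw [bf_c, A.bracket_c]; simp
  | zero => simp
  | add a b _ _ h1 h2 => simp only [lie_add, map_add, Finsupp.add_apply, h1, h2]; ring
  | smul c a _ h => simp only [lie_smul, map_smul, Finsupp.smul_apply, smul_eq_mul, h]; ring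


lemma coc_lie_L0 (x : sv) :
    (B A).repr ⁅A.L 0, x⁆ .c = 0 := by
  have hx : x ∈ Submodule.span ℂ (Set.range (bf A)) := by rw [span' A]; trivial
  induction hx using Submodule.span_induction with
  | mem a ha =>
    obtain ⟨i, rfl⟩ := ha
    match i with
    | .L n =>
      rw [bf_L, A.bracket_LL]
      have h0 : (if (0:ℤ) + n = 0 then (((0:ℤ):ℂ) ^ 3 - ((0:ℤ):ℂ)) / 12 else 0) = 0 := by
        split <;> norm_num
      rw [h0, zero_smul, add_zero]
      simp
    | .M n => rw [bf_M, A.bracket_LM]; simp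
    | .Y n => rw [bf_Y, A.bracket_LY]; simp
    | .c => rw [bf_c, A.bracket_c]; simp
  | zero => simp
  | add a b _ _ h1 h2 => simp [lie_add, h1, h2]
  | smul c a _ h => simp [lie_smul, h]

lemma half_ne (n j : ℤ) : ((n:ℂ) + 1/2 + (j:ℂ)) ≠ 0 := by
  intro h
  have h1 : ((2*n + 2*j + 1 : ℤ) : ℂ) = 0 := by push_cast; linear_combination 2*h
  have h2 : (2*n + 2*j + 1 : ℤ) = 0 := by exact_mod_cast h1
  omega

variable (θ : ConjAntiInvolution sv)

lemma t_zero : θ.toFun 0 = 0 := by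
  have h := θ.map_smul' 0 0
  simpa using h

lemma t_sub (x y : sv) : θ.toFun (x - y) = θ.toFun x - θ.toFun y := by
  have h := θ.map_add' (x - y) y
  rw [sub_add_cancel] at h
  exact eq_sub_iff_add_eq.mpr h.symm

section Main

variable (α : ℝ)

/-- the defect of θ on L -/
noncomputable def w (n : ℤ) : sv := θ.toFun (A.L n) - ((α : ℂ) ^ n) • A.L (-n)

/-- the hypothesis on θ -/
def HL : Prop := ∀ n : ℤ, θ.toFun (A.L n) - ((α : ℂ) ^ n) • A.L (-n) ∈
        Submodule.span ℂ (Set.range A.M ∪ Set.range A.Y)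

variable {A θ α}

lemma w_mem (hL : HL A θ α) (n : ℤ) : w A θ α n ∈ MY A := hL n

lemma thetaL (n : ℤ) : θ.toFun (A.L n) = ((α : ℂ) ^ n) • A.L (-n) + w A θ α n := by
  rw [w]; abel

lemma thetaL0 : θ.toFun (A.L 0) = A.L 0 + w A θ α 0 := by
  have h := thetaL (A := A) (θ := θ) (α := α) 0
  rwa [zpow_zero, one_smul, neg_zero] at h

lemma thetaY_mem (hL : HL A θ α) (n : ℤ) : θ.toFun (A.Y n) ∈ MY A := by
  set x := θ.toFun (A.Y n) with hxdef
  have hb := θ.map_bracket' (A.L 0) (A.Y n)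
  rw [A.bracket_LY 0 n, θ.map_smul', zero_add] at hb
  have hconj : (starRingEnd ℂ) ((n:ℂ) + (1 - ((0:ℤ):ℂ))/2) = (n:ℂ) + 1/2 := by
    rw [map_add, map_div₀, map_sub, map_intCast, map_intCast, map_one, map_ofNat]
    norm_num
  rw [hconj, thetaL0 (α := α), lie_add, ← hxdef] at hb
  -- hb : ((n:ℂ) + 1/2) • x = ⁅x, A.L 0⁆ + ⁅x, w 0⁆
  have hkey : ((n:ℂ) + 1/2) • x + ⁅A.L 0, x⁆ = ⁅x, w A θ α 0⁆ := by
    rw [hb, ← lie_skew (A.L 0) x]; abel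
  have hv : ⁅x, w A θ α 0⁆ ∈ MY A := lie_mem_MY A (w_mem hL 0) x
  apply mem_MY_of_coords
  · intro j
    have h1 := congrArg (fun u => (B A).repr u (.L j)) hkey
    simp only [map_add, map_smul, Finsupp.add_apply, Finsupp.smul_apply, smul_eq_mul] at h1
    rw [coL_lie_L0, coL_MY A hv] at h1
    have h2 : ((n:ℂ) + 1/2 + j) * (B A).repr x (.L j) = 0 := by linear_combination h1
    rcases mul_eq_zero.mp h2 with h | h
    · exact absurd h (half_ne n j)
    · exact h
  · have h1 := congrArg (fun u => (B A).repr u .c) hkey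
    simp only [map_add, map_smul, Finsupp.add_apply, Finsupp.smul_apply, smul_eq_mul] at h1
    rw [coc_lie_L0, coc_MY A hv, add_zero] at h1
    rcases mul_eq_zero.mp h1 with h | h
    · have hne := half_ne n 0
      simp only [Int.cast_zero, add_zero] at hne
      exact absurd h hne
    · exact h

lemma thetaM1_mem (hL : HL A θ α) : θ.toFun (A.M 1) ∈ Mo A := by
  have hY : ⁅A.Y (-1), A.Y 1⁆ = (2:ℂ) • A.M 1 := by
    rw [A.bracket_YY]
    norm_num
  have hM1 : A.M 1 = (2:ℂ)⁻¹ • ⁅A.Y (-1), A.Y 1⁆ := by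
    rw [hY, smul_smul]; norm_num
  rw [hM1, θ.map_smul', θ.map_bracket']
  apply Submodule.smul_mem
  exact lie_MY_MY A (thetaY_mem hL 1) (thetaY_mem hL (-1))

lemma thetaM1 (hL : HL A θ α) :
    θ.toFun (A.M 1) = ((B A).repr (θ.toFun (A.M 1)) (.M (-1))) • A.M (-1) := by
  set x := θ.toFun (A.M 1) with hxdef
  have hxMo : x ∈ Mo A := thetaM1_mem hL
  have hb := θ.map_bracket' (A.L 0) (A.M 1)
  rw [A.bracket_LM 0 1, θ.map_smul', zero_add] at hb
  have hconj : (starRingEnd ℂ) ((1:ℤ):ℂ) = 1 := by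
    rw [map_intCast]; norm_num
  rw [hconj, one_smul, thetaL0 (α := α), lie_add, ← hxdef] at hb
  rw [lie_Mo_MY A hxMo (w_mem hL 0), add_zero, ← lie_skew] at hb
  -- hb : x = -⁅A.L 0, x⁆
  have hMk : ∀ k : ℤ, k ≠ -1 → (B A).repr x (.M k) = 0 := by
    intro k hk
    have h1 := congrArg (fun u => (B A).repr u (.M k)) hb
    simp only [map_neg, Finsupp.neg_apply] at h1
    rw [coM_lie_L A (Mo_le_MY A hxMo) 0 k, sub_zero, Int.cast_zero, sub_zero] at h1
    have h2 : (1 + (k:ℂ)) * (B A).repr x (.M k) = 0 := by linear_combination h1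
    rcases mul_eq_zero.mp h2 with h | h
    · exfalso
      have h3 : ((1 + k : ℤ) : ℂ) = 0 := by push_cast; linear_combination h
      have h4 : (1 + k : ℤ) = 0 := by exact_mod_cast h3
      omega
    · exact h
  have hall : ∀ i, (B A).repr (x - ((B A).repr x (.M (-1))) • A.M (-1)) i = 0 := by
    intro i
    simp only [map_sub, map_smul, Finsupp.sub_apply, Finsupp.smul_apply, smul_eq_mul, repr_M]
    match i with
    | .L j => rw [coL_MY A (Mo_le_MY A hxMo)]; simp
    | .c => rw [coc_MY A (Mo_le_MY A hxMo)]; simp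
    | .Y j => rw [coY_Mo A hxMo]; simp
    | .M k =>
      by_cases h : k = -1
      · subst h; simp
      · rw [hMk k h, if_neg (by simp only [SVIndex.M.injEq]; omega)]
        ring
  have hz := eq_zero_of_coords A hall
  exact sub_eq_zero.mp hz

lemma thetaM (hL : HL A θ α) (n : ℤ) :
    θ.toFun (A.M n) =
      (((B A).repr (θ.toFun (A.M 1)) (.M (-1))) * (α:ℂ) ^ (n - 1)) • A.M (-n) := by
  set μ₁ := (B A).repr (θ.toFun (A.M 1)) (.M (-1)) with hmudef
  have hb := θ.map_bracket' (A.L (n-1)) (A.M 1)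
  rw [A.bracket_LM (n-1) 1] at hb
  rw [show n - 1 + 1 = n by omega] at hb
  have hconj : θ.toFun (((1:ℤ):ℂ) • A.M n) = θ.toFun (A.M n) := by
    norm_num
  rw [hconj, thetaM1 hL, ← hmudef, thetaL (α := α) (n-1)] at hb
  rw [lie_add, lie_smul, smul_lie, smul_lie] at hb
  rw [lie_Mo_MY A (M_mem_Mo A (-1)) (w_mem hL (n-1))] at hb
  rw [← lie_skew (A.M (-1)) (A.L (-(n-1))), A.bracket_LM] at hb
  rw [show -(n-1) + -1 = -n by omega] at hb
  rw [hb, smul_zero, add_zero, show ((-1:ℤ):ℂ) = -1 by norm_num]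
  module

lemma M_ne_zero (n : ℤ) : A.M n ≠ 0 := by
  have h := (indep' A).ne_zero (SVIndex.M n)
  simpa using h

lemma mu_abs (hL : HL A θ α) :
    (starRingEnd ℂ) ((B A).repr (θ.toFun (A.M 1)) (.M (-1)) * (α:ℂ) ^ ((0:ℤ) - 1))
      * ((B A).repr (θ.toFun (A.M 1)) (.M (-1)) * (α:ℂ) ^ ((0:ℤ) - 1)) = 1 := by
  set c := (B A).repr (θ.toFun (A.M 1)) (.M (-1)) * (α:ℂ) ^ ((0:ℤ) - 1) with hcdef
  have h0 := thetaM (α := α) hL 0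
  rw [neg_zero, ← hcdef] at h0
  have h00 := θ.invol' (A.M 0)
  rw [h0, θ.map_smul', h0, smul_smul] at h00
  nth_rewrite 2 [show A.M 0 = (1:ℂ) • A.M 0 by rw [one_smul]] at h00
  have h2 := sub_eq_zero.mpr h00
  rw [← sub_smul] at h2
  rcases smul_eq_zero.mp h2 with h | h
  · exact sub_eq_zero.mp h
  · exact absurd h (M_ne_zero 0)

lemma lie_expand (a b : ℂ) (x y u v : sv) :
    ⁅a • x + u, b • y + v⁆ = (a*b) • ⁅x, y⁆ + a • ⁅x, v⁆ - b • ⁅y, u⁆ + ⁅u, v⁆ := by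
  simp only [lie_add, add_lie, lie_smul, smul_lie]
  rw [← lie_skew u y]
  module

lemma c_eq : A.c = (2:ℂ) • ⁅A.L 2, A.L (-2)⁆ + (8:ℂ) • A.L 0 := by
  rw [A.bracket_LL 2 (-2), if_pos (by omega)]
  push_cast
  match_scalars <;> norm_num

lemma thetaC_sub_mem (hα : α ≠ 0) (hL : HL A θ α) : θ.toFun A.c - A.c ∈ MY A := by
  have hne : (α:ℂ) ≠ 0 := Complex.ofReal_ne_zero.mpr hα
  have hc := c_eq (A := A)
  have h1 : θ.toFun A.c = (2:ℂ) • ⁅θ.toFun (A.L (-2)), θ.toFun (A.L 2)⁆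
      + (8:ℂ) • θ.toFun (A.L 0) := by
    conv_lhs => rw [hc]
    rw [θ.map_add', θ.map_smul', θ.map_smul', θ.map_bracket', map_ofNat, map_ofNat]
  have hz : θ.toFun A.c - A.c =
      (2:ℂ) • ((((α:ℂ)^(-2:ℤ) * (α:ℂ)^(2:ℤ)) - 1) • ⁅A.L 2, A.L (-2)⁆
        + ((α:ℂ)^(-2:ℤ)) • ⁅A.L 2, w A θ α 2⁆
        - ((α:ℂ)^(2:ℤ)) • ⁅A.L (-2), w A θ α (-2)⁆
        + ⁅w A θ α (-2), w A θ α 2⁆)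
      + (8:ℂ) • w A θ α 0 := by
    conv_lhs => rw [h1, thetaL (α := α) 2, thetaL (α := α) (-2), thetaL0 (α := α), hc]
    rw [neg_neg, lie_expand]
    module
  have hαα : ((α:ℂ)^(-2:ℤ) * (α:ℂ)^(2:ℤ)) - 1 = 0 := by
    rw [← zpow_add₀ hne]
    norm_num
  rw [hz, hαα, zero_smul, zero_add]
  apply Submodule.add_mem
  · apply Submodule.smul_mem
    apply Submodule.add_mem
    · apply Submodule.sub_mem
      · exact Submodule.smul_mem _ _ (lie_mem_MY A (w_mem hL 2) _)
      · exact Submodule.smul_mem _ _ (lie_mem_MY A (w_mem hL (-2)) _)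
    · exact Mo_le_MY A (lie_MY_MY A (w_mem hL (-2)) (w_mem hL 2))
  · exact Submodule.smul_mem _ _ (w_mem hL 0)

lemma lie_L0_thetaC : ⁅A.L 0, θ.toFun A.c⁆ = 0 := by
  have h := θ.map_bracket' (θ.toFun (A.L 0)) A.c
  rw [A.bracket_c, θ.invol', t_zero] at h
  rw [← lie_skew, ← h, neg_zero]

lemma thetaC (hα : α ≠ 0) (hL : HL A θ α) :
    θ.toFun A.c = A.c + ((B A).repr (θ.toFun A.c - A.c) (.M 0)) • A.M 0 := by
  set z := θ.toFun A.c - A.c with hzdef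
  have hzMY : z ∈ MY A := thetaC_sub_mem hα hL
  have hlz : ⁅A.L 0, z⁆ = 0 := by
    rw [hzdef, lie_sub, lie_L0_thetaC, A.bracket_c, sub_zero]
  have hM : ∀ k : ℤ, k ≠ 0 → (B A).repr z (.M k) = 0 := by
    intro k hk
    have h1 := congrArg (fun u => (B A).repr u (.M k)) hlz
    simp only [map_zero, Finsupp.coe_zero, Pi.zero_apply] at h1
    rw [coM_lie_L A hzMY 0 k, sub_zero, Int.cast_zero, sub_zero] at h1
    rcases mul_eq_zero.mp h1 with h | h
    · exact absurd (by exact_mod_cast h) hk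
    · exact h
  have hY : ∀ k : ℤ, (B A).repr z (.Y k) = 0 := by
    intro k
    have h1 := congrArg (fun u => (B A).repr u (.Y k)) hlz
    simp only [map_zero, Finsupp.coe_zero, Pi.zero_apply] at h1
    rw [coY_lie_L A hzMY 0 k, sub_zero, Int.cast_zero, sub_zero] at h1
    rcases mul_eq_zero.mp h1 with h | h
    · exfalso
      have h2 := half_ne k 0
      rw [Int.cast_zero, add_zero] at h2
      exact h2 (by linear_combination h)
    · exact h
  have hall : ∀ i, (B A).repr (z - ((B A).repr z (.M 0)) • A.M 0) i = 0 := by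
    intro i
    simp only [map_sub, map_smul, Finsupp.sub_apply, Finsupp.smul_apply, smul_eq_mul, repr_M]
    match i with
    | .L j => rw [coL_MY A hzMY]; simp
    | .c => rw [coc_MY A hzMY]; simp
    | .Y j => rw [hY j]; simp
    | .M k =>
      by_cases h : k = 0
      · subst h; simp
      · rw [hM k h, if_neg (by simp only [SVIndex.M.injEq]; omega)]
        ring
  have hzz := eq_zero_of_coords A hall
  have := sub_eq_zero.mp hzz
  rw [← this, hzdef]
  abel

lemma Rgen (hα : α ≠ 0) (hL : HL A θ α) (m n : ℤ) (h : m + n ≠ 0) :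
    ((n:ℂ) - m) • w A θ α (m+n) =
      ((α:ℂ)^n) • ⁅A.L (-n), w A θ α m⁆ - ((α:ℂ)^m) • ⁅A.L (-m), w A θ α n⁆
       + ⁅w A θ α n, w A θ α m⁆ := by
  have hne : (α:ℂ) ≠ 0 := Complex.ofReal_ne_zero.mpr hα
  have hb := θ.map_bracket' (A.L m) (A.L n)
  rw [A.bracket_LL m n, if_neg h, zero_smul, add_zero, θ.map_smul', map_sub,
    map_intCast, map_intCast] at hb
  rw [thetaL (α := α) (m+n), thetaL (α := α) m, thetaL (α := α) n] at hb
  rw [zpow_add₀ hne m n] at hb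
  rw [lie_expand] at hb
  rw [A.bracket_LL (-n) (-m), if_neg (by omega), zero_smul, add_zero] at hb
  rw [show -n + -m = -(m+n) by omega] at hb
  push_cast at hb ⊢
  linear_combination (norm := module) hb

lemma R0 (hα : α ≠ 0) (hL : HL A θ α) (m : ℤ) :
    ((-2:ℂ) * m) • w A θ α 0
      + ((((m:ℂ)^3 - m)/12) * ((B A).repr (θ.toFun A.c - A.c) (.M 0))) • A.M 0
      = ((α:ℂ)^(-m)) • ⁅A.L m, w A θ α m⁆ - ((α:ℂ)^m) • ⁅A.L (-m), w A θ α (-m)⁆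
        + ⁅w A θ α (-m), w A θ α m⁆ := by
  have hne : (α:ℂ) ≠ 0 := Complex.ofReal_ne_zero.mpr hα
  have hb := θ.map_bracket' (A.L m) (A.L (-m))
  rw [A.bracket_LL m (-m), if_pos (by omega)] at hb
  rw [θ.map_add', θ.map_smul', θ.map_smul', map_sub, map_intCast, map_intCast] at hb
  have hconj : (starRingEnd ℂ) (((m:ℂ)^3 - (m:ℂ))/12) = ((m:ℂ)^3 - m)/12 := by
    rw [map_div₀, map_sub, map_pow, map_intCast, map_ofNat]
  rw [hconj] at hb
  rw [show m + -m = 0 by omega] at hb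
  rw [thetaL0 (α := α), thetaC hα hL, thetaL (α := α) m, thetaL (α := α) (-m)] at hb
  rw [neg_neg, lie_expand] at hb
  have hcol : ((α:ℂ)^(-m) * (α:ℂ)^m) = 1 := by
    rw [← zpow_add₀ hne]
    norm_num
  rw [hcol, one_smul] at hb
  rw [A.bracket_LL m (-m), if_pos (by omega), show m + -m = 0 by omega] at hb
  push_cast at hb ⊢
  linear_combination (norm := module) hb

lemma odd_ne (s : ℤ) : (2*(s:ℂ)+1) ≠ 0 := by
  intro h
  have h2 := half_ne s 0
  rw [Int.cast_zero, add_zero] at h2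
  exact h2 (by linear_combination h/2)

lemma MY_eq : MY A = Mo A ⊔ Yo A := Submodule.span_union _ _

lemma exists_div {y : sv} (hy : y ∈ Yo A) :
    ∃ g ∈ Yo A, ∀ s : ℤ, (B A).repr g (.Y s) = (B A).repr y (.Y s) / (2*(s:ℂ)+1) := by
  induction hy using Submodule.span_induction with
  | mem a ha =>
    obtain ⟨j, rfl⟩ := ha
    refine ⟨(2*(j:ℂ)+1)⁻¹ • A.Y j, Submodule.smul_mem _ _ (Y_mem_Yo A j), ?_⟩
    intro s
    simp only [map_smul, Finsupp.smul_apply, smul_eq_mul, repr_Y, SVIndex.Y.injEq]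
    by_cases h : j = s
    · subst h; rw [if_pos rfl, mul_one, one_div]
    · rw [if_neg h, mul_zero, zero_div]
  | zero => exact ⟨0, Submodule.zero_mem _, by intro s; simp⟩
  | add a b ha hb iha ihb =>
    obtain ⟨g1, hg1, hp1⟩ := iha
    obtain ⟨g2, hg2, hp2⟩ := ihb
    refine ⟨g1 + g2, Submodule.add_mem _ hg1 hg2, ?_⟩
    intro s
    simp only [map_add, Finsupp.add_apply, hp1 s, hp2 s]
    rw [add_div]
  | smul c a ha iha =>
    obtain ⟨g1, hg1, hp1⟩ := iha
    refine ⟨c • g1, Submodule.smul_mem _ _ hg1, ?_⟩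
    intro s
    simp only [map_smul, Finsupp.smul_apply, smul_eq_mul, hp1 s]
    rw [mul_div_assoc]

lemma exists_g (hα : α ≠ 0) (hL : HL A θ α) :
    ∃ g ∈ Yo A, ∀ n k : ℤ, (B A).repr (w A θ α n) (.Y k)
      = (α:ℂ)^n * (2*(k:ℂ) + 3*(n:ℂ) + 1) * (B A).repr g (.Y (k+n)) := by
  have h0 : w A θ α 0 ∈ Mo A ⊔ Yo A := MY_eq (A := A) ▸ w_mem hL 0
  obtain ⟨m₀, hm₀, y₀, hy₀, hsum⟩ := Submodule.mem_sup.mp h0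
  obtain ⟨g, hg, hgd⟩ := exists_div hy₀
  refine ⟨g, hg, ?_⟩
  have hw0co : ∀ s : ℤ, (B A).repr (w A θ α 0) (.Y s) = (B A).repr y₀ (.Y s) := by
    intro s; rw [← hsum, map_add, Finsupp.add_apply, coY_Mo A hm₀, zero_add]
  have hbase : ∀ s : ℤ, (B A).repr (w A θ α 0) (.Y s)
      = (2*(s:ℂ)+1) * (B A).repr g (.Y s) := by
    intro s
    rw [hgd s, ← hw0co s, mul_comm (2*(s:ℂ)+1), div_mul_cancel₀ _ (odd_ne s)]
  intro n k
  by_cases hn : n = 0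
  · subst hn
    rw [show k + 0 = k by omega, hbase k, zpow_zero]
    push_cast
    ring
  · have hR := Rgen hα hL 0 n (by omega)
    rw [zero_add, zpow_zero, one_smul, neg_zero] at hR
    have hco := congrArg (fun u => (B A).repr u (.Y k)) hR
    simp only [map_add, map_sub, map_smul, Finsupp.add_apply, Finsupp.sub_apply,
      Finsupp.smul_apply, smul_eq_mul] at hco
    rw [coY_lie_L A (w_mem hL 0) (-n) k, coY_lie_L A (w_mem hL n) 0 k,
      coY_Mo A (lie_MY_MY A (w_mem hL n) (w_mem hL 0))] at hco
    rw [show k - -n = k + n by omega, sub_zero] at hco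
    rw [hbase (k+n)] at hco
    push_cast at hco ⊢
    have hhalf : ((n:ℂ) + (k:ℂ) + 1/2) ≠ 0 := by
      intro hc
      exact half_ne n k (by linear_combination hc)
    apply mul_left_cancel₀ hhalf
    linear_combination hco

lemma yMo (hL : HL A θ α) {g : sv} (hg : g ∈ Yo A)
    (hgp : ∀ n k : ℤ, (B A).repr (w A θ α n) (.Y k)
      = (α:ℂ)^n * (2*(k:ℂ) + 3*(n:ℂ) + 1) * (B A).repr g (.Y (k+n))) (n : ℤ) :
    w A θ α n - (2*(α:ℂ)^n) • ⁅A.L (-n), g⁆ ∈ Mo A := by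
  have hgMY := Yo_le_MY A hg
  have hbMY : ⁅A.L (-n), g⁆ ∈ MY A := lie_mem_MY A hgMY _
  apply mem_Mo_of_coords
  · intro j
    simp only [map_sub, map_smul, Finsupp.sub_apply, Finsupp.smul_apply, smul_eq_mul]
    rw [coL_MY A (w_mem hL n), coL_MY A hbMY]
    ring
  · intro k
    simp only [map_sub, map_smul, Finsupp.sub_apply, Finsupp.smul_apply, smul_eq_mul]
    rw [hgp n k, coY_lie_L A hgMY (-n) k, show k - -n = k + n by omega]
    push_cast
    ring
  · simp only [map_sub, map_smul, Finsupp.sub_apply, Finsupp.smul_apply, smul_eq_mul]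
    rw [coc_MY A (w_mem hL n), coc_MY A hbMY]
    ring

lemma quad (hL : HL A θ α) {g : sv} (hg : g ∈ Yo A)
    (hgp : ∀ n k : ℤ, (B A).repr (w A θ α n) (.Y k)
      = (α:ℂ)^n * (2*(k:ℂ) + 3*(n:ℂ) + 1) * (B A).repr g (.Y (k+n))) (n m : ℤ) :
    ⁅w A θ α n, w A θ α m⁆
      = ((2*(α:ℂ)^n) * (2*(α:ℂ)^m)) • ⁅⁅A.L (-n), g⁆, ⁅A.L (-m), g⁆⁆ := by
  have hgMY := Yo_le_MY A hg
  have hun := yMo hL hg hgp n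
  have hum := yMo hL hg hgp m
  have hwn : w A θ α n = (2*(α:ℂ)^n) • ⁅A.L (-n), g⁆
      + (w A θ α n - (2*(α:ℂ)^n) • ⁅A.L (-n), g⁆) := by module
  have hwm : w A θ α m = (2*(α:ℂ)^m) • ⁅A.L (-m), g⁆
      + (w A θ α m - (2*(α:ℂ)^m) • ⁅A.L (-m), g⁆) := by module
  conv_lhs => rw [hwn, hwm]
  rw [lie_expand]
  rw [lie_MY_Mo A (lie_mem_MY A hgMY (A.L (-n))) hum]
  rw [lie_MY_Mo A (lie_mem_MY A hgMY (A.L (-m))) hun]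
  rw [lie_Mo_MY A hun (Mo_le_MY A hum)]
  simp

end Main

/-- auxiliary quadratic coordinate function -/
noncomputable def phi (A : SVAlgebra sv) (a b k : ℤ) (x y : sv) : ℂ :=
  (B A).repr ⁅⁅A.L a, x⁆, ⁅A.L b, y⁆⁆ (.M k)

lemma phi_YY_eq (A : SVAlgebra sv) (a b k s t : ℤ) (h : a + s + b + t + 1 = k) :
    phi A a b k (A.Y s) (A.Y t)
      = ((s:ℂ)+(1-(a:ℂ))/2) * ((t:ℂ)+(1-(b:ℂ))/2) * ((b:ℂ)+(t:ℂ)-(a:ℂ)-(s:ℂ)) := by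
  unfold phi
  rw [A.bracket_LY a s, A.bracket_LY b t, lie_smul, smul_lie, A.bracket_YY]
  simp only [map_smul, Finsupp.smul_apply, smul_eq_mul, repr_M, SVIndex.M.injEq]
  rw [if_pos (by omega)]
  push_cast
  ring

lemma phi_YY_ne (A : SVAlgebra sv) (a b k s t : ℤ) (h : ¬ (a + s + b + t + 1 = k)) :
    phi A a b k (A.Y s) (A.Y t) = 0 := by
  unfold phi
  rw [A.bracket_LY a s, A.bracket_LY b t, lie_smul, smul_lie, A.bracket_YY]
  simp only [map_smul, Finsupp.smul_apply, smul_eq_mul, repr_M, SVIndex.M.injEq]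
  rw [if_neg (by omega)]
  ring

lemma phi_addl (A : SVAlgebra sv) (a b k : ℤ) (x y z : sv) :
    phi A a b k (x + y) z = phi A a b k x z + phi A a b k y z := by
  unfold phi
  rw [lie_add, add_lie, map_add, Finsupp.add_apply]

lemma phi_addr (A : SVAlgebra sv) (a b k : ℤ) (x y z : sv) :
    phi A a b k x (y + z) = phi A a b k x y + phi A a b k x z := by
  unfold phi
  rw [lie_add, lie_add, map_add, Finsupp.add_apply]

lemma phi_smull (A : SVAlgebra sv) (a b k : ℤ) (r : ℂ) (x z : sv) :
    phi A a b k (r • x) z = r * phi A a b k x z := by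
  unfold phi
  rw [lie_smul, smul_lie, map_smul, Finsupp.smul_apply, smul_eq_mul]

lemma phi_smulr (A : SVAlgebra sv) (a b k : ℤ) (r : ℂ) (x z : sv) :
    phi A a b k x (r • z) = r * phi A a b k x z := by
  unfold phi
  rw [lie_smul, lie_smul, map_smul, Finsupp.smul_apply, smul_eq_mul]

lemma phi_zerol (A : SVAlgebra sv) (a b k : ℤ) (z : sv) : phi A a b k 0 z = 0 := by
  unfold phi
  rw [lie_zero, zero_lie, map_zero]
  simp

lemma phi_zeror (A : SVAlgebra sv) (a b k : ℤ) (x : sv) : phi A a b k x 0 = 0 := by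
  unfold phi
  rw [lie_zero, lie_zero, map_zero]
  simp

/-- the quadratic combination whose antisymmetry yields θ(c) = c -/
noncomputable def Fq (A : SVAlgebra sv) (x y : sv) : ℂ :=
  3 * phi A (-2) (-1) (-3) x y + phi A (-3) 1 (-2) x y - 3 * phi A 2 1 3 x y
    - phi A 3 (-1) 2 x y + phi A 2 (-2) 0 x y - 2 * phi A 1 (-1) 0 x y

lemma Fq_skew (A : SVAlgebra sv) {x y : sv} (hx : x ∈ Yo A) (hy : y ∈ Yo A) :
    Fq A x y = - Fq A y x := by
  induction hx, hy using Submodule.span_induction₂ with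
  | mem_mem u v hu hv =>
    obtain ⟨s, rfl⟩ := hu
    obtain ⟨t, rfl⟩ := hv
    by_cases h : s + t = -1
    · unfold Fq
      rw [phi_YY_eq A _ _ _ _ _ (by omega), phi_YY_eq A _ _ _ _ _ (by omega),
        phi_YY_eq A _ _ _ _ _ (by omega), phi_YY_eq A _ _ _ _ _ (by omega),
        phi_YY_eq A _ _ _ _ _ (by omega), phi_YY_eq A _ _ _ _ _ (by omega),
        phi_YY_eq A _ _ _ _ _ (by omega), phi_YY_eq A _ _ _ _ _ (by omega),
        phi_YY_eq A _ _ _ _ _ (by omega), phi_YY_eq A _ _ _ _ _ (by omega),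
        phi_YY_eq A _ _ _ _ _ (by omega), phi_YY_eq A _ _ _ _ _ (by omega)]
      have ht : t = -1 - s := by omega
      subst ht
      push_cast
      ring
    · unfold Fq
      rw [phi_YY_ne A _ _ _ _ _ (by omega), phi_YY_ne A _ _ _ _ _ (by omega),
        phi_YY_ne A _ _ _ _ _ (by omega), phi_YY_ne A _ _ _ _ _ (by omega),
        phi_YY_ne A _ _ _ _ _ (by omega), phi_YY_ne A _ _ _ _ _ (by omega),
        phi_YY_ne A _ _ _ _ _ (by omega), phi_YY_ne A _ _ _ _ _ (by omega),
        phi_YY_ne A _ _ _ _ _ (by omega), phi_YY_ne A _ _ _ _ _ (by omega),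
        phi_YY_ne A _ _ _ _ _ (by omega), phi_YY_ne A _ _ _ _ _ (by omega)]
      ring
  | zero_left y hy =>
    unfold Fq
    simp only [phi_zerol, phi_zeror]
    ring
  | zero_right x hx =>
    unfold Fq
    simp only [phi_zerol, phi_zeror]
    ring
  | add_left u v z hu hv hz h1 h2 =>
    unfold Fq at h1 h2 ⊢
    simp only [phi_addl, phi_addr] at h1 h2 ⊢
    linear_combination h1 + h2
  | add_right u v z hu hv hz h1 h2 =>
    unfold Fq at h1 h2 ⊢
    simp only [phi_addl, phi_addr] at h1 h2 ⊢
    linear_combination h1 + h2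
  | smul_left r u v hu hv h1 =>
    unfold Fq at h1 ⊢
    simp only [phi_smull, phi_smulr] at h1 ⊢
    linear_combination r * h1
  | smul_right r u v hu hv h1 =>
    unfold Fq at h1 ⊢
    simp only [phi_smull, phi_smulr] at h1 ⊢
    linear_combination r * h1

lemma Fq_gg (A : SVAlgebra sv) {g : sv} (hg : g ∈ Yo A) : Fq A g g = 0 := by
  have h := Fq_skew A hg hg
  linear_combination h / 2

section Final

variable {θ : ConjAntiInvolution sv} {α : ℝ}
variable {A}

lemma ext_lemma (hα : α ≠ 0) (hL : HL A θ α) {g : sv} (hg : g ∈ Yo A)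
    (hgp : ∀ n k : ℤ, (B A).repr (w A θ α n) (.Y k)
      = (α:ℂ)^n * (2*(k:ℂ) + 3*(n:ℂ) + 1) * (B A).repr g (.Y (k+n)))
    (m n s : ℤ) (hs : m + n = s) (h : s ≠ 0) :
    ((n:ℂ) - m) * (B A).repr (w A θ α s) (.M (-s))
      = (α:ℂ)^n * (-(m:ℂ)) * (B A).repr (w A θ α m) (.M (-m))
        - (α:ℂ)^m * (-(n:ℂ)) * (B A).repr (w A θ α n) (.M (-n))
        + (2*(α:ℂ)^n) * (2*(α:ℂ)^m) * phi A (-n) (-m) (-s) g g := by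
  subst hs
  have hR := Rgen hα hL m n (by omega)
  rw [quad hL hg hgp n m] at hR
  have hco := congrArg (fun x => (B A).repr x (.M (-(m+n)))) hR
  simp only [map_add, map_sub, map_smul, Finsupp.add_apply, Finsupp.sub_apply,
    Finsupp.smul_apply, smul_eq_mul] at hco
  rw [coM_lie_L A (w_mem hL m) (-n) (-(m+n)), coM_lie_L A (w_mem hL n) (-m) (-(m+n))] at hco
  rw [show -(m+n) - -n = -m by omega, show -(m+n) - -m = -n by omega] at hco
  unfold phi
  push_cast at hco ⊢
  linear_combination hco

lemma ext0_lemma (hα : α ≠ 0) (hL : HL A θ α) {g : sv} (hg : g ∈ Yo A)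
    (hgp : ∀ n k : ℤ, (B A).repr (w A θ α n) (.Y k)
      = (α:ℂ)^n * (2*(k:ℂ) + 3*(n:ℂ) + 1) * (B A).repr g (.Y (k+n)))
    (m : ℤ) :
    (-2:ℂ) * m * (B A).repr (w A θ α 0) (.M 0)
      + ((m:ℂ)^3 - m)/12 * (B A).repr (θ.toFun A.c - A.c) (.M 0)
      = (α:ℂ)^(-m) * (-(m:ℂ)) * (B A).repr (w A θ α m) (.M (-m))
        - (α:ℂ)^m * (m:ℂ) * (B A).repr (w A θ α (-m)) (.M m)
        + (2*(α:ℂ)^(-m)) * (2*(α:ℂ)^m) * phi A m (-m) 0 g g := by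
  have hR := R0 hα hL m
  rw [quad hL hg hgp (-m) m, neg_neg] at hR
  have hco := congrArg (fun x => (B A).repr x (.M 0)) hR
  simp only [map_add, map_sub, map_smul, Finsupp.add_apply, Finsupp.sub_apply,
    Finsupp.smul_apply, smul_eq_mul, repr_M] at hco
  rw [if_true, mul_one, ← Finsupp.sub_apply, ← map_sub] at hco
  rw [coM_lie_L A (w_mem hL m) m 0, coM_lie_L A (w_mem hL (-m)) (-m) 0] at hco
  rw [show (0:ℤ) - m = -m by omega, show (0:ℤ) - -m = m by omega] at hco
  unfold phi
  push_cast at hco ⊢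
  linear_combination hco

lemma beta_zero (hα : α ≠ 0) (hL : HL A θ α) :
    (B A).repr (θ.toFun A.c - A.c) (.M 0) = 0 := by
  have hne : (α:ℂ) ≠ 0 := Complex.ofReal_ne_zero.mpr hα
  obtain ⟨g, hg, hgp⟩ := exists_g hα hL
  -- zpow conversions
  have hzp2 : (α:ℂ)^(2:ℤ) = (α:ℂ)^(2:ℕ) := by
    rw [show (2:ℤ) = ((2:ℕ):ℤ) by norm_num, zpow_natCast]
  have hzp3 : (α:ℂ)^(3:ℤ) = (α:ℂ)^(3:ℕ) := by
    rw [show (3:ℤ) = ((3:ℕ):ℤ) by norm_num, zpow_natCast]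
  have hzm1 : (α:ℂ)^(-1:ℤ) = ((α:ℂ)⁻¹) := by
    rw [zpow_neg, zpow_one]
  have hzm2 : (α:ℂ)^(-2:ℤ) = ((α:ℂ)⁻¹)^(2:ℕ) := by
    rw [zpow_neg, hzp2, inv_pow]
  have hzm3 : (α:ℂ)^(-3:ℤ) = ((α:ℂ)⁻¹)^(3:ℕ) := by
    rw [zpow_neg, hzp3, inv_pow]
  have hzp1 : (α:ℂ)^(1:ℤ) = (α:ℂ) := zpow_one _
  have hu : (α:ℂ) * (α:ℂ)⁻¹ = 1 := mul_inv_cancel₀ hne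
  have e1 := ext_lemma hα hL hg hgp 1 2 3 (by norm_num) (by norm_num)
  have e2 := ext_lemma hα hL hg hgp (-1) 3 2 (by norm_num) (by norm_num)
  have e3 := ext_lemma hα hL hg hgp (-1) (-2) (-3) (by norm_num) (by norm_num)
  have e4 := ext_lemma hα hL hg hgp 1 (-3) (-2) (by norm_num) (by norm_num)
  have e5 := ext0_lemma hα hL hg hgp 1
  have e6 := ext0_lemma hα hL hg hgp 2
  have e7 : Fq A g g = 0 := Fq_gg A hg
  unfold Fq at e7
  set β := (B A).repr (θ.toFun A.c - A.c) (.M 0) with hβ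
  norm_num at e1 e2 e3 e4 e5 e6
  simp only [hzp1, hzp2, hzp3, hzm1, hzm2, hzm3, ← inv_pow] at e1 e2 e3 e4 e5 e6
  set t := (α:ℂ) with htdef
  set u := (α:ℂ)⁻¹ with hudef
  set a3 := (B A).repr (w A θ α 3) (.M (-3)) with ha3
  set a2 := (B A).repr (w A θ α 2) (.M (-2)) with ha2
  set a1 := (B A).repr (w A θ α 1) (.M (-1)) with ha1
  set a0 := (B A).repr (w A θ α 0) (.M 0) with ha0
  set am1 := (B A).repr (w A θ α (-1)) (.M 1) with ham1
  set am2 := (B A).repr (w A θ α (-2)) (.M 2) with ham2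
  set am3 := (B A).repr (w A θ α (-3)) (.M 3) with ham3
  set p21 := phi A (-2) (-1) (-3) g g with hp21
  set p3m1 := phi A (-3) 1 (-2) g g with hp3m1
  set pm2m1 := phi A 2 1 3 g g with hpm2m1
  set pm31 := phi A 3 (-1) 2 g g with hpm31
  set pm22 := phi A 2 (-2) 0 g g with hpm22
  set pm11 := phi A 1 (-1) 0 g g with hpm11
  linear_combination (6*u^3)*e1 + (2*u^2)*e2 - (6*t^3)*e3 - (2*t^2)*e4 - 4*e5 + 2*e6 + 8*e7
    - (4*a1*t*u^2 + 4*a1*u - 12*a2*u^2 + 4*am1*t + 4*am1*t^2*u - 12*am2*t^2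
      + (-24*p21 - 8*p3m1 + 24*pm2m1 + 8*pm31)*(1 + t*u + t^2*u^2)
      + 16*pm11 - 8*pm22*(1 + t*u))*hu

lemma thetaC_final (hα : α ≠ 0) (hL : HL A θ α) : θ.toFun A.c = A.c := by
  have h := thetaC hα hL
  rw [beta_zero hα hL, zero_smul, add_zero] at h
  exact h

end Final
end SVAux

variable {sv : Type*} [LieRing sv] [LieAlgebra ℂ sv]

/-- If `θ(L_n) ≡ αⁿ·L_{−n} (mod M ⊕ Y)` for all `n`, then `θ(c) = c` and
`θ(M_n) = μ·αⁿ·M_{−n}` for some `μ` of modulus one. -/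
theorem sv_antiInvolution_on_M_and_c (A : SVAlgebra sv) (θ : ConjAntiInvolution sv)
    (α : ℝ) (hα : α ≠ 0)
    (hL : ∀ n : ℤ, θ.toFun (A.L n) - ((α : ℂ) ^ n) • A.L (-n) ∈
        Submodule.span ℂ (Set.range A.M ∪ Set.range A.Y)) :
    θ.toFun A.c = A.c ∧
    ∃ μ : ℂ, ‖μ‖ = 1 ∧
      ∀ n : ℤ, θ.toFun (A.M n) = (μ * (α : ℂ) ^ n) • A.M (-n) := by
  have hL' : SVAux.HL A θ α := hL
  have hne : (α:ℂ) ≠ 0 := Complex.ofReal_ne_zero.mpr hα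
  constructor
  · exact SVAux.thetaC_final hα hL'
  · refine ⟨(SVAux.B A).repr (θ.toFun (A.M 1)) (.M (-1)) * (α:ℂ)^(-1:ℤ), ?_, ?_⟩
    · have h := SVAux.mu_abs (α := α) hL'
      rw [show (0:ℤ) - 1 = -1 by norm_num] at h
      set μ := (SVAux.B A).repr (θ.toFun (A.M 1)) (.M (-1)) * (α:ℂ)^(-1:ℤ) with hμ
      have h2 : (Complex.normSq μ : ℂ) = 1 := by
        rw [← Complex.mul_conj μ]
        linear_combination h
      have h3 : Complex.normSq μ = 1 := by exact_mod_cast h2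
      rw [Complex.norm_def, h3, Real.sqrt_one]
    · intro n
      rw [SVAux.thetaM hL' n]
      congr 1
      rw [show n - 1 = -1 + n by omega, zpow_add₀ hne]
      ring
end

section
/- Let α ∈ ℂ∖{0} and let (β_m)_{m∈ℤ} be complex numbers satisfying (n−m)·β_{m+n} = n·α^m·β_n − m·α^n·β_m for all m, n ∈ ℤ. Then β_m = ((m+1)/2)·α^{m−1}·β₁ − ((m−1)/2)·α^{m+1}·β_{−1} for every m ∈ ℤ. -/
private lemma beta_step_up (α : ℂ) (hα : α ≠ 0) (β : ℤ → ℂ)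
    (h : ∀ m n : ℤ, ((n : ℂ) - (m : ℂ)) * β (m + n) =
        (n : ℂ) * α ^ m * β n - (m : ℂ) * α ^ n * β m)
    (m : ℤ) (hm : m ≠ 1)
    (ih : β m = (((m : ℂ) + 1) / 2) * α ^ (m - 1) * β 1
        - (((m : ℂ) - 1) / 2) * α ^ (m + 1) * β (-1)) :
    β (m + 1) = (((m : ℂ) + 1 + 1) / 2) * α ^ m * β 1
        - (((m : ℂ) + 1 - 1) / 2) * α ^ (m + 2) * β (-1) := by
  have e := h m 1
  push_cast at e
  have hne : (1 : ℂ) - (m : ℂ) ≠ 0 := by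
    intro hc
    apply hm
    have h1 : (1 : ℂ) = (m : ℂ) := sub_eq_zero.mp hc
    exact_mod_cast h1.symm
  have h1 : α ^ (m - 1) = α ^ m * α⁻¹ := by
    rw [zpow_sub₀ hα, zpow_one, div_eq_mul_inv]
  have h2 : α ^ (m + 1) = α ^ m * α := by rw [zpow_add₀ hα, zpow_one]
  have h3 : α ^ (m + 2) = α ^ m * α * α := by
    rw [show m + 2 = m + 1 + 1 by ring, zpow_add₀ hα, h2, zpow_one]
  have hinv : α * α⁻¹ = 1 := mul_inv_cancel₀ hα
  have key : ((1 : ℂ) - (m : ℂ)) * β (m + 1)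
      = ((1 : ℂ) - (m : ℂ)) * ((((m : ℂ) + 1 + 1) / 2) * α ^ m * β 1
        - (((m : ℂ) + 1 - 1) / 2) * α ^ (m + 2) * β (-1)) := by
    rw [e, ih, h1, h2, h3, zpow_one]
    field_simp
    ring
  exact mul_left_cancel₀ hne key

private lemma beta_two (α : ℂ) (hα : α ≠ 0) (β : ℤ → ℂ)
    (h : ∀ m n : ℤ, ((n : ℂ) - (m : ℂ)) * β (m + n) =
        (n : ℂ) * α ^ m * β n - (m : ℂ) * α ^ n * β m) :
    β 2 = (3 / 2) * α * β 1 - (1 / 2) * (α * α * α) * β (-1) := by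
  have hinv : α * α⁻¹ = 1 := mul_inv_cancel₀ hα
  have e1 := h 1 2
  have e2 := h (-1) 3
  rw [show (1:ℤ) + 2 = 3 by norm_num] at e1
  rw [show (-1:ℤ) + 3 = 2 by norm_num] at e2
  push_cast at e1 e2
  rw [zpow_one, show α ^ (2:ℤ) = α * α by
        rw [show (2:ℤ) = 1 + 1 by ring, zpow_add₀ hα, zpow_one]] at e1
  rw [show α ^ (3:ℤ) = α * α * α by
        rw [show (3:ℤ) = 1 + 1 + 1 by ring, zpow_add₀ hα, zpow_add₀ hα, zpow_one],
      show α ^ (-1:ℤ) = α⁻¹ by simp] at e2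
  have key : α * β 2 = α * ((3 / 2) * α * β 1 - (1 / 2) * (α * α * α) * β (-1)) := by
    linear_combination (-1/2 : ℂ) * α * e2 + (-3/2 : ℂ) * e1 + (-3/2 : ℂ) * β 3 * hinv
  exact mul_left_cancel₀ hα key

private lemma beta_pos (α : ℂ) (hα : α ≠ 0) (β : ℤ → ℂ)
    (h : ∀ m n : ℤ, ((n : ℂ) - (m : ℂ)) * β (m + n) =
        (n : ℂ) * α ^ m * β n - (m : ℂ) * α ^ n * β m) :
    ∀ m : ℤ, 0 ≤ m → β m = (((m : ℂ) + 1) / 2) * α ^ (m - 1) * β 1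
        - (((m : ℂ) - 1) / 2) * α ^ (m + 1) * β (-1) := by
  intro m hm
  refine Int.le_induction (motive := fun k _ => β k = (((k : ℂ) + 1) / 2) * α ^ (k - 1) * β 1
      - (((k : ℂ) - 1) / 2) * α ^ (k + 1) * β (-1)) ?_ ?_ m hm
  · -- β 0
    have e := h 1 (-1)
    rw [show (1:ℤ) + (-1) = 0 by norm_num] at e
    push_cast at e
    rw [zpow_one, show α ^ (-1:ℤ) = α⁻¹ by simp] at e
    beta_reduce
    rw [show α ^ ((0:ℤ) - 1) = α⁻¹ by norm_num,
        show α ^ ((0:ℤ) + 1) = α by norm_num]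
    push_cast
    linear_combination (-1/2 : ℂ) * e
  · intro n hn ih
    rcases eq_or_lt_of_le hn with h0 | h0
    · -- n = 0, goal β 1
      have hn0 : n = 0 := h0.symm
      subst hn0
      norm_num
    · rcases eq_or_lt_of_le (show (1:ℤ) ≤ n by omega) with h1 | h1
      · -- n = 1, goal β 2
        have hn1 : n = 1 := by omega
        subst hn1
        rw [show (1:ℤ) + 1 = 2 by norm_num, beta_two α hα β h,
            show α ^ ((2:ℤ) + 1) = α * α * α by
              rw [show (2:ℤ) + 1 = 1 + 1 + 1 by ring, zpow_add₀ hα, zpow_add₀ hα, zpow_one],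
            show α ^ ((2:ℤ) - 1) = α by norm_num]
        push_cast
        ring
      · -- n ≥ 2
        have key := beta_step_up α hα β h n (by omega) ih
        rw [show n + 1 - 1 = n by ring, show n + 1 + 1 = n + 2 by ring]
        push_cast at key ⊢
        linear_combination key

/-- If the complex numbers `β m` satisfy
`(n−m)·β_{m+n} = n·α^m·β_n − m·α^n·β_m` for all `m, n ∈ ℤ`, then
`β_m = ((m+1)/2)·α^{m−1}·β₁ − ((m−1)/2)·α^{m+1}·β_{−1}` for all `m ∈ ℤ`. -/
theorem beta_recursion_solution (α : ℂ) (hα : α ≠ 0) (β : ℤ → ℂ)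
    (h : ∀ m n : ℤ, ((n : ℂ) - (m : ℂ)) * β (m + n) =
        (n : ℂ) * α ^ m * β n - (m : ℂ) * α ^ n * β m) :
    ∀ m : ℤ, β m = (((m : ℂ) + 1) / 2) * α ^ (m - 1) * β 1
        - (((m : ℂ) - 1) / 2) * α ^ (m + 1) * β (-1) := by
  intro m
  rcases le_or_gt 0 m with hm | hm
  · exact beta_pos α hα β h m hm
  · -- negative case via symmetry
    set γ : ℤ → ℂ := fun k => β (-k) with hγdef
    have hγ : ∀ p q : ℤ, ((q : ℂ) - (p : ℂ)) * γ (p + q) =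
        (q : ℂ) * (α⁻¹) ^ p * γ q - (p : ℂ) * (α⁻¹) ^ q * γ p := by
      intro p q
      have e := h (-p) (-q)
      push_cast at e
      simp only [hγdef]
      rw [show -(p + q) = -p + -q by ring, inv_zpow', inv_zpow']
      linear_combination -e
    have key := beta_pos α⁻¹ (inv_ne_zero hα) γ hγ (-m) (by omega)
    simp only [hγdef, neg_neg] at key
    push_cast at key
    rw [inv_zpow', inv_zpow', show -(-m - 1) = m + 1 by ring,
        show -(-m + 1) = m - 1 by ring] at key
    rw [key]
    ring
end

section
/- Let V be an 𝔰𝔳-module and let (x_n)_{n∈ℤ} be arbitrary complex scalars. If (L_n + x_n·M_n)·v = 0 and c·v = 0 for all n ∈ ℤ and all v ∈ V, then M_n·v = 0 and Y_{n+1/2}·v = 0 for all n ∈ ℤ and all v ∈ V; consequently 𝔰𝔳·V = 0. -/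
variable {sv : Type*} [LieRing sv] [LieAlgebra ℂ sv]

variable {V : Type*} [AddCommGroup V] [Module ℂ V] [LieRingModule sv V] [LieModule ℂ sv V]

/-- If the elements `L_n + x_n·M_n` and `c` all act as zero on an `𝔰𝔳`-module `V`,
then `M` and `Y` also act as zero; consequently `𝔰𝔳·V = 0`. -/
theorem sv_trivial_on_virasoro_copy_implies_trivial (A : SVAlgebra sv) (x : ℤ → ℂ)
    (h : ∀ (n : ℤ) (v : V), ⁅A.L n + (x n) • A.M n, v⁆ = 0)
    (hc : ∀ v : V, ⁅A.c, v⁆ = 0) :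
    (∀ (n : ℤ) (v : V), ⁅A.M n, v⁆ = 0 ∧ ⁅A.Y n, v⁆ = 0) ∧
    (∀ (g : sv) (v : V), ⁅g, v⁆ = 0) := by

  -- Step 1: Y acts trivially.
  have hY : ∀ (k : ℤ) (v : V), ⁅A.Y k, v⁆ = 0 := by
    intro k v
    have h1 : ⁅⁅A.L 0 + x 0 • A.M 0, A.Y k⁆, v⁆ = 0 := by
      rw [lie_lie, h 0, h 0 v, lie_zero, sub_zero]
    rw [add_lie, smul_lie, A.bracket_LY, A.bracket_MY, smul_zero, add_zero,
      smul_lie, zero_add] at h1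
    have hcoef : ((k : ℂ) + (1 - (0 : ℤ)) / 2) ≠ 0 := by
      push_cast
      intro hco
      have h2 : ((2 * k + 1 : ℤ) : ℂ) = 0 := by push_cast; linear_combination 2 * hco
      have h3 : (2 * k + 1 : ℤ) = 0 := by exact_mod_cast h2
      omega
    exact (smul_eq_zero.mp h1).resolve_left hcoef
  -- Step 2: M acts trivially.
  have hM : ∀ (k : ℤ) (v : V), ⁅A.M k, v⁆ = 0 := by
    intro k v
    rcases eq_or_ne k 1 with rfl | hk
    · have h1 : ⁅⁅A.Y 1, A.Y (-1)⁆, v⁆ = 0 := by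
        simp [lie_lie, hY]
      rw [A.bracket_YY] at h1
      norm_num at h1
      exact h1
    · have h1 : ⁅⁅A.Y 0, A.Y (k - 1)⁆, v⁆ = 0 := by
        simp [lie_lie, hY]
      rw [A.bracket_YY] at h1
      have hk0 : (0 : ℤ) + (k - 1) + 1 = k := by ring
      rw [hk0, smul_lie, smul_eq_zero] at h1
      rcases h1 with h1 | h1
      · exfalso
        apply hk
        have h2 : ((k - 1 : ℤ) : ℂ) = 0 := by push_cast at h1 ⊢; linear_combination h1
        have h3 : (k - 1 : ℤ) = 0 := by exact_mod_cast h2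
        omega
      · exact h1
  -- Step 3: L acts trivially.
  have hL : ∀ (k : ℤ) (v : V), ⁅A.L k, v⁆ = 0 := by
    intro k v
    have h1 := h k v
    rw [add_lie, smul_lie, hM, smul_zero, add_zero] at h1
    exact h1
  refine ⟨fun n v => ⟨hM n v, hY n v⟩, fun g v => ?_⟩
  -- Step 4: everything acts trivially, via the spanning property.
  let f : sv →ₗ[ℂ] V :=
    { toFun := fun g => ⁅g, v⁆
      map_add' := fun a b => add_lie a b v
      map_smul' := fun c a => smul_lie c a v }
  have hker : Submodule.span ℂ (Set.range (fun i : SVIndex =>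
      match i with
      | .L n => A.L n
      | .M n => A.M n
      | .Y n => A.Y n
      | .c => A.c)) ≤ LinearMap.ker f := by
    rw [Submodule.span_le]
    rintro _ ⟨i, rfl⟩
    rcases i with n | n | n | _
    · exact hL n v
    · exact hM n v
    · exact hY n v
    · exact hc v
  rw [A.span_top, top_le_iff] at hker
  have : f g = 0 := by rw [← LinearMap.mem_ker, hker]; trivial
  exact this
end
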